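/- arXiv:1207.5762 — 6 statements merged into one kernel-verified Lean document; each statement's English description precedes it below -/
import Mathlib

section
/- Let f : [0,1]² → [0,∞) be integrable with ∫₀¹ f(x,y) dx = 1 for a.e. y and ∫₀¹ f(x,y) dy = 1 for a.e. x. Suppose there exist nonnegative integrable functions ε₁, ε₂ : [0,1] → [0,∞) such that f(x,y) ≥ ε₁(x) + ε₂(y) for a.e. (x,y). Then ∫₀¹ ε₁ + ∫₀¹ ε₂ < 2, and for all g, h ∈ L²(0,1) that are mean-zero, |∫₀¹∫₀¹ f(x,y) g(x) h(y) dx dy| ≤ (1 − ½(∫₀¹ ε₁ + ∫₀¹ ε₂)) ‖g‖₂ ‖h‖₂. -/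
open MeasureTheory
open scoped ENNReal

/-- The unit interval `[0,1]` as a subset of `ℝ`. -/
def I01 : Set ℝ := Set.Icc 0 1

/-- Lebesgue measure restricted to `[0,1]`. -/
noncomputable def μ01 : Measure ℝ := volume.restrict I01

instance : IsProbabilityMeasure μ01 :=
  ⟨by simp [μ01, I01, Measure.restrict_apply, Real.volume_Icc]⟩

lemma sqrt_amgm {a b : ℝ} (ha1 : a ≤ 1) (hb1 : b ≤ 1) :
    Real.sqrt ((1 - a) * (1 - b)) ≤ 1 - (a + b) / 2 := by
  have h1 : 0 ≤ 1 - (a + b) / 2 := by linarith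
  calc Real.sqrt ((1 - a) * (1 - b)) ≤ Real.sqrt ((1 - (a + b) / 2) ^ 2) :=
        Real.sqrt_le_sqrt (by nlinarith [sq_nonneg (a-b)])
    _ = 1 - (a + b) / 2 := Real.sqrt_sq h1

theorem copula_aux {α : Type*} [MeasurableSpace α] (μ : Measure α) [IsProbabilityMeasure μ]
    (f : α → α → ℝ) (ε₁ ε₂ : α → ℝ)
    (hf_meas : Measurable (Function.uncurry f))
    (hf_nonneg : ∀ x y, 0 ≤ f x y)
    (hf_int : Integrable (Function.uncurry f) (μ.prod μ))
    (hmarg_x : ∀ᵐ y ∂μ, (∫ x, f x y ∂μ) = 1)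
    (hmarg_y : ∀ᵐ x ∂μ, (∫ y, f x y ∂μ) = 1)
    (hε₁_nonneg : ∀ x, 0 ≤ ε₁ x) (hε₂_nonneg : ∀ x, 0 ≤ ε₂ x)
    (hε₁_int : Integrable ε₁ μ) (hε₂_int : Integrable ε₂ μ)
    (hdom : ∀ᵐ p ∂(μ.prod μ), ε₁ p.1 + ε₂ p.2 ≤ f p.1 p.2) :
    (∫ x, ε₁ x ∂μ) + (∫ x, ε₂ x ∂μ) < 2 ∧
    ∀ g h : α → ℝ, MemLp g 2 μ → MemLp h 2 μ →
      (∫ x, g x ∂μ) = 0 → (∫ x, h x ∂μ) = 0 →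
      |∫ x, ∫ y, f x y * g x * h y ∂μ ∂μ| ≤
        (1 - (1 / 2) * ((∫ x, ε₁ x ∂μ) + (∫ x, ε₂ x ∂μ))) *
          Real.sqrt (∫ x, g x ^ 2 ∂μ) * Real.sqrt (∫ x, h x ^ 2 ∂μ) := by
  set a := ∫ x, ε₁ x ∂μ with hadef
  set b := ∫ x, ε₂ x ∂μ with hbdef
  have ha0 : 0 ≤ a := integral_nonneg hε₁_nonneg
  have hb0 : 0 ≤ b := integral_nonneg hε₂_nonneg
  have hfaesm : AEStronglyMeasurable (Function.uncurry f) (μ.prod μ) :=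
    hf_meas.aestronglyMeasurable
  have hε₁sm : AEStronglyMeasurable ε₁ μ := hε₁_int.aestronglyMeasurable
  have hε₂sm : AEStronglyMeasurable ε₂ μ := hε₂_int.aestronglyMeasurable
  have hswap : Measure.QuasiMeasurePreserving (Prod.swap : α × α → α × α)
      (μ.prod μ) (μ.prod μ) := Measure.measurePreserving_swap.quasiMeasurePreserving
  have hdom' : ∀ᵐ p ∂(μ.prod μ), ε₁ p.2 + ε₂ p.1 ≤ f p.2 p.1 := hswap.ae hdom
  have hfx_int : ∀ᵐ x ∂μ, Integrable (fun y => f x y) μ := hf_int.prod_right_ae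
  have hfy_int : ∀ᵐ y ∂μ, Integrable (fun x => f x y) μ := hf_int.swap.prod_right_ae
  -- pointwise a.e. bounds on ε₁, ε₂
  have hbound₁ : ∀ᵐ x ∂μ, ε₁ x + b ≤ 1 := by
    filter_upwards [hfx_int, hmarg_y, Measure.ae_ae_of_ae_prod hdom] with x hix hmx hdx
    have h1 : ∫ y, (ε₁ x + ε₂ y) ∂μ ≤ ∫ y, f x y ∂μ :=
      integral_mono_ae ((integrable_const _).add hε₂_int) hix hdx
    rw [integral_add (integrable_const _) hε₂_int, integral_const, hmx] at h1
    simpa [measure_univ] using h1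
  have hbound₂ : ∀ᵐ y ∂μ, ε₂ y + a ≤ 1 := by
    filter_upwards [hfy_int, hmarg_x, Measure.ae_ae_of_ae_prod hdom'] with y hiy hmy hdy
    have h1 : ∫ x, (ε₂ y + ε₁ x) ∂μ ≤ ∫ x, f x y ∂μ := by
      refine integral_mono_ae ((integrable_const _).add hε₁_int) hiy ?_
      filter_upwards [hdy] with x hx
      linarith
    rw [integral_add (integrable_const _) hε₁_int, integral_const, hmy] at h1
    simpa [measure_univ] using h1
  have hab1 : a + b ≤ 1 := by
    have h1 : a ≤ 1 - b := by
      have h2 : a ≤ ∫ _x, (1 - b) ∂μ := by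
        refine integral_mono_ae hε₁_int (integrable_const _) ?_
        filter_upwards [hbound₁] with x hx
        linarith
      simpa [measure_univ] using h2
    linarith
  have ha1 : a ≤ 1 := by linarith
  have hb1 : b ≤ 1 := by linarith
  have h1b0 : (0:ℝ) ≤ 1 - b := by linarith
  have h1a0 : (0:ℝ) ≤ 1 - a := by linarith
  refine ⟨by linarith, ?_⟩
  intro g h hg hh hg0 hh0

  -- basic integrability of g, h
  have hg1 : Integrable g μ := hg.integrable (by norm_num)
  have hh1 : Integrable h μ := hh.integrable (by norm_num)
  have hg2 : Integrable (fun x => g x ^ 2) μ := hg.integrable_sq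
  have hh2 : Integrable (fun x => h x ^ 2) μ := hh.integrable_sq
  set G2 := ∫ x, g x ^ 2 ∂μ with hG2def
  set H2 := ∫ x, h x ^ 2 ∂μ with hH2def
  have hG20 : 0 ≤ G2 := integral_nonneg fun x => sq_nonneg _
  have hH20 : 0 ≤ H2 := integral_nonneg fun x => sq_nonneg _
  have hε₁g : Integrable (fun x => ε₁ x * g x) μ := by
    refine Integrable.mono' (hg1.abs.const_mul (1 - b)) (hε₁sm.mul hg.1) ?_
    filter_upwards [hbound₁] with x hx
    rw [norm_mul, Real.norm_eq_abs, Real.norm_eq_abs, abs_of_nonneg (hε₁_nonneg x)]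
    have : (0:ℝ) ≤ |g x| := abs_nonneg _
    nlinarith
  have hε₂h : Integrable (fun x => ε₂ x * h x) μ := by
    refine Integrable.mono' (hh1.abs.const_mul (1 - a)) (hε₂sm.mul hh.1) ?_
    filter_upwards [hbound₂] with x hx
    rw [norm_mul, Real.norm_eq_abs, Real.norm_eq_abs, abs_of_nonneg (hε₂_nonneg x)]
    have : (0:ℝ) ≤ |h x| := abs_nonneg _
    nlinarith
  -- the kernel K
  set K : α × α → ℝ := fun p => f p.1 p.2 - ε₁ p.1 - ε₂ p.2 with hKdef
  have hK0 : ∀ᵐ p ∂(μ.prod μ), 0 ≤ K p := by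
    filter_upwards [hdom] with p hp
    simp only [hKdef]
    linarith
  have hKsm : AEStronglyMeasurable K (μ.prod μ) :=
    (hfaesm.sub hε₁sm.comp_fst).sub hε₂sm.comp_snd
  have hε₁fst : Integrable (fun p : α × α => ε₁ p.1) (μ.prod μ) := by
    simpa using hε₁_int.mul_prod (integrable_const (1:ℝ))
  have hε₂snd : Integrable (fun p : α × α => ε₂ p.2) (μ.prod μ) := by
    simpa using (integrable_const (1:ℝ)).mul_prod hε₂_int
  have hKint : Integrable K (μ.prod μ) := (hf_int.sub hε₁fst).sub hε₂snd
  -- marginal lintegral bounds for K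
  have hmarg1 : ∀ᵐ x ∂μ, ∫⁻ y, ENNReal.ofReal (K (x, y)) ∂μ ≤ ENNReal.ofReal (1 - b) := by
    filter_upwards [hfx_int, hmarg_y, Measure.ae_ae_of_ae_prod hdom] with x hix hmx hdx
    have hKx_int : Integrable (fun y => K (x, y)) μ := by
      exact (hix.sub (integrable_const (ε₁ x))).sub hε₂_int
    have hKx_nn : 0 ≤ᵐ[μ] fun y => K (x, y) := by
      filter_upwards [hdx] with y hy
      simp only [hKdef, Pi.zero_apply]
      linarith
    rw [← ofReal_integral_eq_lintegral_ofReal hKx_int hKx_nn]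
    apply ENNReal.ofReal_le_ofReal
    have e1 : Integrable (fun y => f x y - ε₁ x) μ := by
      exact hix.sub (integrable_const (ε₁ x))
    have : ∫ y, K (x, y) ∂μ = 1 - ε₁ x - b := by
      simp only [hKdef]
      rw [integral_sub e1 hε₂_int, integral_sub hix (integrable_const (ε₁ x)),
        integral_const, hmx]
      simp [measure_univ]
      rfl
    rw [this]
    have := hε₁_nonneg x
    linarith
  have hmarg2 : ∀ᵐ y ∂μ, ∫⁻ x, ENNReal.ofReal (K (x, y)) ∂μ ≤ ENNReal.ofReal (1 - a) := by
    filter_upwards [hfy_int, hmarg_x, Measure.ae_ae_of_ae_prod hdom'] with y hiy hmy hdy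
    have hKy_int : Integrable (fun x => K (x, y)) μ := by
      exact (hiy.sub hε₁_int).sub (integrable_const (ε₂ y))
    have hKy_nn : 0 ≤ᵐ[μ] fun x => K (x, y) := by
      filter_upwards [hdy] with x hx
      simp only [hKdef, Pi.zero_apply]
      linarith
    rw [← ofReal_integral_eq_lintegral_ofReal hKy_int hKy_nn]
    apply ENNReal.ofReal_le_ofReal
    have e1 : Integrable (fun x => f x y - ε₁ x) μ := by
      exact hiy.sub hε₁_int
    have : ∫ x, K (x, y) ∂μ = 1 - a - ε₂ y := by
      simp only [hKdef]
      rw [integral_sub e1 (integrable_const (ε₂ y)), integral_sub hiy hε₁_int,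
        integral_const, hmy]
      simp [measure_univ]
      rfl
    rw [this]
    have := hε₂_nonneg y
    linarith
  have hKaem : AEMeasurable (fun p => ENNReal.ofReal (K p)) (μ.prod μ) :=
    hKsm.aemeasurable.ennreal_ofReal
  have hgaem2 : AEMeasurable (fun p : α × α => ENNReal.ofReal (g p.1 ^ 2)) (μ.prod μ) :=
    hg2.aestronglyMeasurable.comp_fst.aemeasurable.ennreal_ofReal
  have hhaem2 : AEMeasurable (fun p : α × α => ENNReal.ofReal (h p.2 ^ 2)) (μ.prod μ) :=
    hh2.aestronglyMeasurable.comp_snd.aemeasurable.ennreal_ofReal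
  -- Schur-type bounds
  have hTg : ∫⁻ p, ENNReal.ofReal (K p) * ENNReal.ofReal (g p.1 ^ 2) ∂(μ.prod μ)
      ≤ ENNReal.ofReal ((1 - b) * G2) := by
    rw [lintegral_prod (fun p => ENNReal.ofReal (K p) * ENNReal.ofReal (g p.1 ^ 2)) (hKaem.mul hgaem2)]
    have step1 : ∀ x, ∫⁻ y, ENNReal.ofReal (K (x, y)) * ENNReal.ofReal (g x ^ 2) ∂μ
        = ENNReal.ofReal (g x ^ 2) * ∫⁻ y, ENNReal.ofReal (K (x, y)) ∂μ := by
      intro x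
      rw [← lintegral_const_mul' _ _ ENNReal.ofReal_ne_top]
      exact lintegral_congr fun y => mul_comm _ _
    calc ∫⁻ x, ∫⁻ y, ENNReal.ofReal (K (x, y)) * ENNReal.ofReal (g x ^ 2) ∂μ ∂μ
        ≤ ∫⁻ x, ENNReal.ofReal (g x ^ 2) * ENNReal.ofReal (1 - b) ∂μ := by
          refine lintegral_mono_ae ?_
          filter_upwards [hmarg1] with x hx
          rw [step1 x]
          exact mul_le_mul_right hx _
      _ = ENNReal.ofReal (1 - b) * ∫⁻ x, ENNReal.ofReal (g x ^ 2) ∂μ := by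
          rw [← lintegral_const_mul' _ _ ENNReal.ofReal_ne_top]
          exact lintegral_congr fun x => mul_comm _ _
      _ = ENNReal.ofReal (1 - b) * ENNReal.ofReal G2 := by
          rw [← ofReal_integral_eq_lintegral_ofReal hg2
            (Filter.Eventually.of_forall fun x => sq_nonneg _)]
      _ = ENNReal.ofReal ((1 - b) * G2) := (ENNReal.ofReal_mul h1b0).symm
  have hTh : ∫⁻ p, ENNReal.ofReal (K p) * ENNReal.ofReal (h p.2 ^ 2) ∂(μ.prod μ)
      ≤ ENNReal.ofReal ((1 - a) * H2) := by
    rw [lintegral_prod_symm (fun p => ENNReal.ofReal (K p) * ENNReal.ofReal (h p.2 ^ 2)) (hKaem.mul hhaem2)]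
    have step1 : ∀ y, ∫⁻ x, ENNReal.ofReal (K (x, y)) * ENNReal.ofReal (h y ^ 2) ∂μ
        = ENNReal.ofReal (h y ^ 2) * ∫⁻ x, ENNReal.ofReal (K (x, y)) ∂μ := by
      intro y
      rw [← lintegral_const_mul' _ _ ENNReal.ofReal_ne_top]
      exact lintegral_congr fun x => mul_comm _ _
    calc ∫⁻ y, ∫⁻ x, ENNReal.ofReal (K (x, y)) * ENNReal.ofReal (h y ^ 2) ∂μ ∂μ
        ≤ ∫⁻ y, ENNReal.ofReal (h y ^ 2) * ENNReal.ofReal (1 - a) ∂μ := by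
          refine lintegral_mono_ae ?_
          filter_upwards [hmarg2] with y hy
          rw [step1 y]
          exact mul_le_mul_right hy _
      _ = ENNReal.ofReal (1 - a) * ∫⁻ y, ENNReal.ofReal (h y ^ 2) ∂μ := by
          rw [← lintegral_const_mul' _ _ ENNReal.ofReal_ne_top]
          exact lintegral_congr fun y => mul_comm _ _
      _ = ENNReal.ofReal (1 - a) * ENNReal.ofReal H2 := by
          rw [← ofReal_integral_eq_lintegral_ofReal hh2
            (Filter.Eventually.of_forall fun x => sq_nonneg _)]
      _ = ENNReal.ofReal ((1 - a) * H2) := (ENNReal.ofReal_mul h1a0).symm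

  -- Cauchy–Schwarz on the product space
  set R : ℝ := Real.sqrt ((1 - b) * G2) * Real.sqrt ((1 - a) * H2) with hRdef
  have hR0 : 0 ≤ R := mul_nonneg (Real.sqrt_nonneg _) (Real.sqrt_nonneg _)
  have hCS : ∫⁻ p, ENNReal.ofReal (K p * |g p.1| * |h p.2|) ∂(μ.prod μ)
      ≤ ENNReal.ofReal R := by
    have hp2 : Real.HolderConjugate 2 2 := by constructor <;> norm_num
    set F : α × α → ℝ≥0∞ := fun p => ENNReal.ofReal (K p) ^ (1/2 : ℝ) * ENNReal.ofReal |g p.1|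
      with hFdef
    set G : α × α → ℝ≥0∞ := fun p => ENNReal.ofReal (K p) ^ (1/2 : ℝ) * ENNReal.ofReal |h p.2|
      with hGdef
    have hFaem : AEMeasurable F (μ.prod μ) :=
      (hKaem.pow aemeasurable_const).mul
        hg.1.comp_fst.norm.aemeasurable.ennreal_ofReal
    have hGaem : AEMeasurable G (μ.prod μ) :=
      (hKaem.pow aemeasurable_const).mul
        hh.1.comp_snd.norm.aemeasurable.ennreal_ofReal
    have key := ENNReal.lintegral_mul_le_Lp_mul_Lq (μ.prod μ) hp2 hFaem hGaem
    have hhalf : ∀ c : ℝ≥0∞, c ^ (1/2 : ℝ) * c ^ (1/2 : ℝ) = c := by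
      intro c
      rw [← ENNReal.rpow_add_of_nonneg _ _ (by norm_num) (by norm_num)]
      norm_num
    have hFG : ∫⁻ p, ENNReal.ofReal (K p * |g p.1| * |h p.2|) ∂(μ.prod μ)
        = ∫⁻ p, (F * G) p ∂(μ.prod μ) := by
      refine lintegral_congr_ae ?_
      filter_upwards [hK0] with p hp
      simp only [hFdef, hGdef, Pi.mul_apply]
      rw [ENNReal.ofReal_mul (mul_nonneg hp (abs_nonneg _)), ENNReal.ofReal_mul hp]
      calc ENNReal.ofReal (K p) * ENNReal.ofReal |g p.1| * ENNReal.ofReal |h p.2|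
          = (ENNReal.ofReal (K p) ^ (1/2:ℝ) * ENNReal.ofReal (K p) ^ (1/2:ℝ)) *
              ENNReal.ofReal |g p.1| * ENNReal.ofReal |h p.2| := by rw [hhalf]
        _ = (ENNReal.ofReal (K p) ^ (1/2:ℝ) * ENNReal.ofReal |g p.1|) *
              (ENNReal.ofReal (K p) ^ (1/2:ℝ) * ENNReal.ofReal |h p.2|) := by ring
    have hFsq : ∀ p : α × α, F p ^ (2:ℝ) = ENNReal.ofReal (K p) * ENNReal.ofReal (g p.1 ^ 2) := by
      intro p
      simp only [hFdef]
      rw [ENNReal.mul_rpow_of_nonneg _ _ (by norm_num : (0:ℝ) ≤ 2),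
        ← ENNReal.rpow_mul, show ((1:ℝ)/2 * 2) = 1 by norm_num, ENNReal.rpow_one,
        ENNReal.ofReal_rpow_of_nonneg (abs_nonneg _) (by norm_num : (0:ℝ) ≤ 2),
        show (2:ℝ) = ((2:ℕ):ℝ) by norm_num, Real.rpow_natCast, sq_abs]
    have hGsq : ∀ p : α × α, G p ^ (2:ℝ) = ENNReal.ofReal (K p) * ENNReal.ofReal (h p.2 ^ 2) := by
      intro p
      simp only [hGdef]
      rw [ENNReal.mul_rpow_of_nonneg _ _ (by norm_num : (0:ℝ) ≤ 2),
        ← ENNReal.rpow_mul, show ((1:ℝ)/2 * 2) = 1 by norm_num, ENNReal.rpow_one,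
        ENNReal.ofReal_rpow_of_nonneg (abs_nonneg _) (by norm_num : (0:ℝ) ≤ 2),
        show (2:ℝ) = ((2:ℕ):ℝ) by norm_num, Real.rpow_natCast, sq_abs]
    have hFbound : (∫⁻ p, F p ^ (2:ℝ) ∂(μ.prod μ)) ^ (1/2:ℝ)
        ≤ ENNReal.ofReal (Real.sqrt ((1 - b) * G2)) := by
      have : ∫⁻ p, F p ^ (2:ℝ) ∂(μ.prod μ) ≤ ENNReal.ofReal ((1 - b) * G2) := by
        calc ∫⁻ p, F p ^ (2:ℝ) ∂(μ.prod μ)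
            = ∫⁻ p, ENNReal.ofReal (K p) * ENNReal.ofReal (g p.1 ^ 2) ∂(μ.prod μ) :=
              lintegral_congr fun p => hFsq p
          _ ≤ _ := hTg
      calc (∫⁻ p, F p ^ (2:ℝ) ∂(μ.prod μ)) ^ (1/2:ℝ)
          ≤ ENNReal.ofReal ((1 - b) * G2) ^ (1/2:ℝ) :=
            ENNReal.rpow_le_rpow this (by norm_num)
        _ = ENNReal.ofReal (((1 - b) * G2) ^ (1/2:ℝ)) :=
            ENNReal.ofReal_rpow_of_nonneg (mul_nonneg h1b0 hG20) (by norm_num)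
        _ = ENNReal.ofReal (Real.sqrt ((1 - b) * G2)) := by rw [← Real.sqrt_eq_rpow]
    have hGbound : (∫⁻ p, G p ^ (2:ℝ) ∂(μ.prod μ)) ^ (1/2:ℝ)
        ≤ ENNReal.ofReal (Real.sqrt ((1 - a) * H2)) := by
      have : ∫⁻ p, G p ^ (2:ℝ) ∂(μ.prod μ) ≤ ENNReal.ofReal ((1 - a) * H2) := by
        calc ∫⁻ p, G p ^ (2:ℝ) ∂(μ.prod μ)
            = ∫⁻ p, ENNReal.ofReal (K p) * ENNReal.ofReal (h p.2 ^ 2) ∂(μ.prod μ) :=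
              lintegral_congr fun p => hGsq p
          _ ≤ _ := hTh
      calc (∫⁻ p, G p ^ (2:ℝ) ∂(μ.prod μ)) ^ (1/2:ℝ)
          ≤ ENNReal.ofReal ((1 - a) * H2) ^ (1/2:ℝ) :=
            ENNReal.rpow_le_rpow this (by norm_num)
        _ = ENNReal.ofReal (((1 - a) * H2) ^ (1/2:ℝ)) :=
            ENNReal.ofReal_rpow_of_nonneg (mul_nonneg h1a0 hH20) (by norm_num)
        _ = ENNReal.ofReal (Real.sqrt ((1 - a) * H2)) := by rw [← Real.sqrt_eq_rpow]
    calc ∫⁻ p, ENNReal.ofReal (K p * |g p.1| * |h p.2|) ∂(μ.prod μ)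
        = ∫⁻ p, (F * G) p ∂(μ.prod μ) := hFG
      _ ≤ (∫⁻ p, F p ^ (2:ℝ) ∂(μ.prod μ)) ^ (1/2:ℝ) *
            (∫⁻ p, G p ^ (2:ℝ) ∂(μ.prod μ)) ^ (1/2:ℝ) := key
      _ ≤ ENNReal.ofReal (Real.sqrt ((1 - b) * G2)) *
            ENNReal.ofReal (Real.sqrt ((1 - a) * H2)) := mul_le_mul' hFbound hGbound
      _ = ENNReal.ofReal R := (ENNReal.ofReal_mul (Real.sqrt_nonneg _)).symm
  -- integrability of the products
  have hKg2_int : Integrable (fun p => K p * g p.1 ^ 2) (μ.prod μ) := by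
    refine ⟨hKsm.mul hg2.aestronglyMeasurable.comp_fst, ?_⟩
    rw [hasFiniteIntegral_iff_norm]
    refine lt_of_le_of_lt ?_ (lt_of_le_of_lt hTg ENNReal.ofReal_lt_top)
    refine lintegral_mono_ae ?_
    filter_upwards [hK0] with p hp
    rw [← ENNReal.ofReal_mul hp]
    apply ENNReal.ofReal_le_ofReal
    rw [Real.norm_eq_abs, abs_mul, abs_of_nonneg hp, abs_of_nonneg (sq_nonneg _)]
  have hKh2_int : Integrable (fun p => K p * h p.2 ^ 2) (μ.prod μ) := by
    refine ⟨hKsm.mul hh2.aestronglyMeasurable.comp_snd, ?_⟩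
    rw [hasFiniteIntegral_iff_norm]
    refine lt_of_le_of_lt ?_ (lt_of_le_of_lt hTh ENNReal.ofReal_lt_top)
    refine lintegral_mono_ae ?_
    filter_upwards [hK0] with p hp
    rw [← ENNReal.ofReal_mul hp]
    apply ENNReal.ofReal_le_ofReal
    rw [Real.norm_eq_abs, abs_mul, abs_of_nonneg hp, abs_of_nonneg (sq_nonneg _)]
  have hKgh_int : Integrable (fun p => K p * g p.1 * h p.2) (μ.prod μ) := by
    refine Integrable.mono' (((hKg2_int.add hKh2_int).const_mul (1/2 : ℝ)))
      ((hKsm.mul hg.1.comp_fst).mul hh.1.comp_snd) ?_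
    filter_upwards [hK0] with p hp
    have e : ‖K p * g p.1 * h p.2‖ = K p * |g p.1| * |h p.2| := by
      rw [Real.norm_eq_abs, abs_mul, abs_mul, abs_of_nonneg hp]
    rw [e]
    show K p * |g p.1| * |h p.2| ≤ 1 / 2 * (K p * g p.1 ^ 2 + K p * h p.2 ^ 2)
    have h2 : K p * |g p.1| * |h p.2|
        ≤ 1 / 2 * (K p * |g p.1| ^ 2 + K p * |h p.2| ^ 2) := by
      clear_value K
      nlinarith [mul_nonneg hp (sq_nonneg (|g p.1| - |h p.2|))]
    simpa [sq_abs] using h2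
  have hε₁gh : Integrable (fun p : α × α => (ε₁ p.1 * g p.1) * h p.2) (μ.prod μ) :=
    hε₁g.mul_prod hh1
  have hε₂gh : Integrable (fun p : α × α => g p.1 * (ε₂ p.2 * h p.2)) (μ.prod μ) :=
    hg1.mul_prod hε₂h
  have edecomp : (fun p : α × α => f p.1 p.2 * g p.1 * h p.2)
      = fun p => K p * g p.1 * h p.2 +
          ((ε₁ p.1 * g p.1) * h p.2 + g p.1 * (ε₂ p.2 * h p.2)) := by
    funext p
    simp only [hKdef]
    ring
  have hΦint : Integrable (fun p : α × α => f p.1 p.2 * g p.1 * h p.2) (μ.prod μ) := by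
    rw [edecomp]
    exact hKgh_int.add (hε₁gh.add hε₂gh)
  have hiter : ∫ x, ∫ y, f x y * g x * h y ∂μ ∂μ
      = ∫ p : α × α, f p.1 p.2 * g p.1 * h p.2 ∂(μ.prod μ) := by
    exact integral_integral hΦint
  have hsum : Integrable (fun p : α × α =>
      (ε₁ p.1 * g p.1) * h p.2 + g p.1 * (ε₂ p.2 * h p.2)) (μ.prod μ) := by
    exact hε₁gh.add hε₂gh
  have hsplit : ∫ p : α × α, f p.1 p.2 * g p.1 * h p.2 ∂(μ.prod μ)
      = ∫ p : α × α, K p * g p.1 * h p.2 ∂(μ.prod μ) := by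
    rw [edecomp, integral_add hKgh_int hsum, integral_add hε₁gh hε₂gh,
      integral_prod_mul (f := fun x => ε₁ x * g x) (g := h),
      integral_prod_mul (f := g) (g := fun y => ε₂ y * h y), hh0, hg0]
    ring
  have habs : |∫ p : α × α, K p * g p.1 * h p.2 ∂(μ.prod μ)| ≤ R := by
    have h1 : |∫ p : α × α, K p * g p.1 * h p.2 ∂(μ.prod μ)|
        ≤ ∫ p : α × α, ‖K p * g p.1 * h p.2‖ ∂(μ.prod μ) := by
      rw [← Real.norm_eq_abs]
      exact norm_integral_le_integral_norm _
    have h2 : ∫ p : α × α, ‖K p * g p.1 * h p.2‖ ∂(μ.prod μ)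
        = (∫⁻ p, ENNReal.ofReal ‖K p * g p.1 * h p.2‖ ∂(μ.prod μ)).toReal :=
      integral_eq_lintegral_of_nonneg_ae
        (Filter.Eventually.of_forall fun p => norm_nonneg _)
        hKgh_int.norm.aestronglyMeasurable
    have h3 : ∫⁻ p, ENNReal.ofReal ‖K p * g p.1 * h p.2‖ ∂(μ.prod μ)
        = ∫⁻ p, ENNReal.ofReal (K p * |g p.1| * |h p.2|) ∂(μ.prod μ) := by
      refine lintegral_congr_ae ?_
      filter_upwards [hK0] with p hp
      rw [Real.norm_eq_abs, abs_mul, abs_mul, abs_of_nonneg hp]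
    have h4 : (∫⁻ p, ENNReal.ofReal ‖K p * g p.1 * h p.2‖ ∂(μ.prod μ)).toReal ≤ R := by
      refine ENNReal.toReal_le_of_le_ofReal hR0 ?_
      rw [h3]
      exact hCS
    rw [h2] at h1
    exact h1.trans h4
  calc |∫ x, ∫ y, f x y * g x * h y ∂μ ∂μ|
      = |∫ p : α × α, K p * g p.1 * h p.2 ∂(μ.prod μ)| := by rw [hiter, hsplit]
    _ ≤ R := habs
    _ = Real.sqrt (1 - b) * Real.sqrt (1 - a) * (Real.sqrt G2 * Real.sqrt H2) := by
        rw [hRdef, Real.sqrt_mul h1b0, Real.sqrt_mul h1a0]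
        ring
    _ = Real.sqrt ((1 - a) * (1 - b)) * (Real.sqrt G2 * Real.sqrt H2) := by
        rw [Real.sqrt_mul h1a0]
        ring
    _ ≤ (1 - (a + b) / 2) * (Real.sqrt G2 * Real.sqrt H2) :=
        mul_le_mul_of_nonneg_right (sqrt_amgm ha1 hb1)
          (mul_nonneg (Real.sqrt_nonneg _) (Real.sqrt_nonneg _))
    _ = (1 - 1 / 2 * (a + b)) * Real.sqrt G2 * Real.sqrt H2 := by ring



/-- Let `f : [0,1]² → [0,∞)` be integrable with
`∫₀¹ f(x,y) dx = 1` for a.e. `y` and `∫₀¹ f(x,y) dy = 1` for a.e. `x`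
(i.e. `f` is a copula density).  Suppose there exist nonnegative integrable
functions `ε₁, ε₂ : [0,1] → [0,∞)` such that `f(x,y) ≥ ε₁(x) + ε₂(y)` for
a.e. `(x,y)`.  Then `∫₀¹ ε₁ + ∫₀¹ ε₂ < 2`, and for all mean-zero
`g, h ∈ L²(0,1)`,
`|∫₀¹∫₀¹ f(x,y) g(x) h(y) dx dy| ≤ (1 − ½(∫₀¹ ε₁ + ∫₀¹ ε₂)) ‖g‖₂ ‖h‖₂`. -/
theorem copula_density_lower_bound_correlation
    (f : ℝ → ℝ → ℝ) (ε₁ ε₂ : ℝ → ℝ)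
    (hf_meas : Measurable (Function.uncurry f))
    (hf_nonneg : ∀ x y, 0 ≤ f x y)
    (hf_int : Integrable (Function.uncurry f) (μ01.prod μ01))
    (hmarg_x : ∀ᵐ y ∂μ01, (∫ x in I01, f x y) = 1)
    (hmarg_y : ∀ᵐ x ∂μ01, (∫ y in I01, f x y) = 1)
    (hε₁_nonneg : ∀ x, 0 ≤ ε₁ x) (hε₂_nonneg : ∀ x, 0 ≤ ε₂ x)
    (hε₁_int : IntegrableOn ε₁ I01) (hε₂_int : IntegrableOn ε₂ I01)
    (hdom : ∀ᵐ p ∂(μ01.prod μ01), ε₁ p.1 + ε₂ p.2 ≤ f p.1 p.2) :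
    (∫ x in I01, ε₁ x) + (∫ x in I01, ε₂ x) < 2 ∧
    ∀ g h : ℝ → ℝ, MemLp g 2 μ01 → MemLp h 2 μ01 →
      (∫ x in I01, g x) = 0 → (∫ x in I01, h x) = 0 →
      |∫ x in I01, ∫ y in I01, f x y * g x * h y| ≤
        (1 - (1 / 2) * ((∫ x in I01, ε₁ x) + (∫ x in I01, ε₂ x))) *
          Real.sqrt (∫ x in I01, g x ^ 2) * Real.sqrt (∫ x in I01, h x ^ 2) := by
  exact copula_aux μ01 f ε₁ ε₂ hf_meas hf_nonneg hf_int hmarg_x hmarg_y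
    hε₁_nonneg hε₂_nonneg hε₁_int hε₂_int hdom
end

section
/- Let μ be a probability measure on [0,1]² whose two coordinate marginals both equal Lebesgue measure on [0,1] (a copula measure). Suppose there exist nonnegative integrable functions ε₁, ε₂ : [0,1] → [0,∞) with ε := ∫₀¹ ε₁ + ∫₀¹ ε₂ > 0, such that μ(A) ≥ ∫_A (ε₁(x) + ε₂(y)) dx dy for every measurable A ⊆ [0,1]². Then for all f, g ∈ L²(0,1) that are mean-zero, |∫_{[0,1]²} f(x) g(y) μ(d(x,y))| ≤ (1 − ε/2) ‖f‖₂ ‖g‖₂; in particular the maximal correlation coefficient ρ₁ = sup{∫ f(x)g(y) dμ : ‖f‖₂ = ‖g‖₂ = 1, f, g mean-zero} satisfies ρ₁ ≤ 1 − ε/2 < 1. -/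
open MeasureTheory
open scoped ENNReal NNReal

lemma I01_meas : MeasurableSet I01 := measurableSet_Icc

instance inst_s2 : IsProbabilityMeasure μ01 :=
  ⟨by simp [μ01, I01, Real.volume_Icc]⟩

lemma aux_amgm {a b : ℝ} : (1 - b) * (1 - a) ≤ (1 - (a + b) / 2) ^ 2 := by
  nlinarith [sq_nonneg (a - b)]

/-- The key estimate. -/
theorem key_bound
    (μ : Measure (ℝ × ℝ)) [IsProbabilityMeasure μ]
    (hmarg1 : μ.map Prod.fst = μ01)
    (hmarg2 : μ.map Prod.snd = μ01)
    (ε₁ ε₂ : ℝ → ℝ)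
    (hε₁_nonneg : ∀ x, 0 ≤ ε₁ x) (hε₂_nonneg : ∀ x, 0 ≤ ε₂ x)
    (hε₁_int : IntegrableOn ε₁ I01) (hε₂_int : IntegrableOn ε₂ I01)
    (hdom : ∀ A : Set (ℝ × ℝ), MeasurableSet A → A ⊆ I01 ×ˢ I01 →
      (∫⁻ p in A, ENNReal.ofReal (ε₁ p.1 + ε₂ p.2)) ≤ μ A)
    (f g : ℝ → ℝ) (hf : MemLp f 2 μ01) (hg : MemLp g 2 μ01)
    (hf0 : (∫ x in I01, f x) = 0) (hg0 : (∫ x in I01, g x) = 0) :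
    |∫ p, f p.1 * g p.2 ∂μ| ≤
      (1 - ((∫ x in I01, ε₁ x) + (∫ x in I01, ε₂ x)) / 2) *
        Real.sqrt (∫ x in I01, f x ^ 2) * Real.sqrt (∫ x in I01, g x ^ 2) := by
  set a := ∫ x in I01, ε₁ x with ha_def
  set b := ∫ x in I01, ε₂ x with hb_def
  have ha_nonneg : 0 ≤ a := integral_nonneg hε₁_nonneg
  have hb_nonneg : 0 ≤ b := integral_nonneg hε₂_nonneg
  have hε₁_int' : Integrable ε₁ μ01 := hε₁_int
  have hε₂_int' : Integrable ε₂ μ01 := hε₂_int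
  have hε₁m : AEMeasurable ε₁ μ01 := hε₁_int'.aestronglyMeasurable.aemeasurable
  have hε₂m : AEMeasurable ε₂ μ01 := hε₂_int'.aestronglyMeasurable.aemeasurable
  set base : Measure (ℝ × ℝ) := μ01.prod μ01 with hbase_def
  have hbase : (volume : Measure (ℝ × ℝ)).restrict (I01 ×ˢ I01) = base := by
    rw [hbase_def, μ01, Measure.prod_restrict, ← Measure.volume_eq_prod]
  set w : ℝ × ℝ → ℝ≥0∞ := fun p => ENNReal.ofReal (ε₁ p.1 + ε₂ p.2) with hw_def
  have hwm : AEMeasurable w base := (hε₁m.comp_fst.add hε₂m.comp_snd).ennreal_ofReal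
  set lam : Measure (ℝ × ℝ) := base.withDensity w with hlam_def
  have hS : MeasurableSet (I01 ×ˢ I01) := I01_meas.prod I01_meas
  -- lam ≤ μ
  have hlamA : ∀ A : Set (ℝ × ℝ), MeasurableSet A → lam A ≤ μ A := by
    intro A hA
    have h1 : lam A = ∫⁻ p in A ∩ I01 ×ˢ I01, w p := by
      rw [hlam_def, withDensity_apply _ hA, ← hbase, Measure.restrict_restrict hA]
    rw [h1]
    exact le_trans (hdom _ (hA.inter hS) Set.inter_subset_right)
      (measure_mono Set.inter_subset_left)
  have hlam_le : lam ≤ μ := Measure.le_iff.mpr hlamA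
  -- total mass of lam
  have hw_eq : w = fun p => ENNReal.ofReal (ε₁ p.1) + ENNReal.ofReal (ε₂ p.2) :=
    funext fun p => ENNReal.ofReal_add (hε₁_nonneg _) (hε₂_nonneg _)
  have h1 : ∫⁻ p, ENNReal.ofReal (ε₁ p.1) ∂base = ENNReal.ofReal a := by
    calc ∫⁻ p, ENNReal.ofReal (ε₁ p.1) ∂base
        = (∫⁻ x, ENNReal.ofReal (ε₁ x) ∂μ01) * ∫⁻ _, (1 : ℝ≥0∞) ∂μ01 := by
          simpa using
            lintegral_prod_mul (μ := μ01) (ν := μ01) (f := fun x => ENNReal.ofReal (ε₁ x))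
              (g := fun _ : ℝ => (1 : ℝ≥0∞)) hε₁m.ennreal_ofReal aemeasurable_const
      _ = ENNReal.ofReal a := by
          rw [lintegral_one, measure_univ, mul_one,
            ← ofReal_integral_eq_lintegral_ofReal hε₁_int'
              (Filter.Eventually.of_forall hε₁_nonneg)]
          rfl
  have h2 : ∫⁻ p, ENNReal.ofReal (ε₂ p.2) ∂base = ENNReal.ofReal b := by
    calc ∫⁻ p, ENNReal.ofReal (ε₂ p.2) ∂base
        = (∫⁻ _, (1 : ℝ≥0∞) ∂μ01) * ∫⁻ x, ENNReal.ofReal (ε₂ x) ∂μ01 := by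
          simpa using
            lintegral_prod_mul (μ := μ01) (ν := μ01) (f := fun _ : ℝ => (1 : ℝ≥0∞))
              (g := fun x => ENNReal.ofReal (ε₂ x)) aemeasurable_const hε₂m.ennreal_ofReal
      _ = ENNReal.ofReal b := by
          rw [lintegral_one, measure_univ, one_mul,
            ← ofReal_integral_eq_lintegral_ofReal hε₂_int'
              (Filter.Eventually.of_forall hε₂_nonneg)]
          rfl
  have hlam_univ : lam Set.univ = ENNReal.ofReal (a + b) := by
    rw [hlam_def, withDensity_apply _ MeasurableSet.univ, Measure.restrict_univ, hw_eq,
      lintegral_add_left' hε₁m.comp_fst.ennreal_ofReal, h1, h2,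
      ENNReal.ofReal_add ha_nonneg hb_nonneg]
  have hab_le_one : a + b ≤ 1 := by
    have := hlamA Set.univ MeasurableSet.univ
    rw [hlam_univ, measure_univ] at this
    exact ENNReal.ofReal_le_one.mp this
  have hlam_fin : IsFiniteMeasure lam :=
    ⟨by rw [hlam_univ]; exact ENNReal.ofReal_lt_top⟩
  -- decomposition μ = ν + lam
  set ν : Measure (ℝ × ℝ) := μ - lam with hν_def
  have h_dec : ν + lam = μ := Measure.sub_add_cancel_of_le hlam_le
  have hν_le : ν ≤ μ := by
    rw [← h_dec]; exact Measure.le_add_right le_rfl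
  -- membership in L² over μ
  have hmpf : MeasurePreserving Prod.fst μ μ01 := ⟨measurable_fst, hmarg1⟩
  have hmps : MeasurePreserving Prod.snd μ μ01 := ⟨measurable_snd, hmarg2⟩
  have hFμ : MemLp (fun p : ℝ × ℝ => f p.1) 2 μ := hf.comp_measurePreserving hmpf
  have hGμ : MemLp (fun p : ℝ × ℝ => g p.2) 2 μ := hg.comp_measurePreserving hmps
  have h_int_μ : Integrable (fun p : ℝ × ℝ => f p.1 * g p.2) μ := by
    have hhalf : (1 : ℝ≥0∞) / 1 = 1 / 2 + 1 / 2 := by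
      rw [ENNReal.add_halves]; simp
    haveI : ENNReal.HolderTriple 2 2 1 := ⟨by rw [inv_one, ENNReal.inv_two_add_inv_two]⟩
    have := MemLp.smul (φ := fun p : ℝ × ℝ => f p.1) (f := fun p : ℝ × ℝ => g p.2)
      (r := 1) hGμ hFμ
    rw [memLp_one_iff_integrable] at this
    exact this
  have h_int_ν : Integrable (fun p : ℝ × ℝ => f p.1 * g p.2) ν :=
    h_int_μ.mono_measure hν_le
  have h_int_lam : Integrable (fun p : ℝ × ℝ => f p.1 * g p.2) lam :=
    h_int_μ.mono_measure hlam_le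
  have h_split : ∫ p, f p.1 * g p.2 ∂μ =
      (∫ p, f p.1 * g p.2 ∂ν) + ∫ p, f p.1 * g p.2 ∂lam := by
    rw [← h_dec, integral_add_measure h_int_ν h_int_lam]
  -- the lam integral vanishes
  set wNN : ℝ × ℝ → ℝ≥0 := fun p => Real.toNNReal (ε₁ p.1 + ε₂ p.2) with hwNN_def
  have hwNNm : AEMeasurable wNN base := (hε₁m.comp_fst.add hε₂m.comp_snd).real_toNNReal
  have hlam_coe : lam = base.withDensity (fun p => (wNN p : ℝ≥0∞)) := rfl
  have h_lam_zero : ∫ p, f p.1 * g p.2 ∂lam = 0 := by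
    have hid : ∫ p, f p.1 * g p.2 ∂lam
        = ∫ p, wNN p • (f p.1 * g p.2) ∂base := by
      rw [hlam_coe, integral_withDensity_eq_integral_smul₀ hwNNm]
    have h_smul_eq : ∀ p : ℝ × ℝ, wNN p • (f p.1 * g p.2)
        = (f p.1 * ε₁ p.1) * g p.2 + f p.1 * (g p.2 * ε₂ p.2) := by
      intro p
      have : (wNN p : ℝ) = ε₁ p.1 + ε₂ p.2 :=
        Real.coe_toNNReal _ (add_nonneg (hε₁_nonneg _) (hε₂_nonneg _))
      rw [NNReal.smul_def, smul_eq_mul, this]; ring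
    have h_tot_int : Integrable (fun p => wNN p • (f p.1 * g p.2)) base := by
      rw [← integrable_withDensity_iff_integrable_smul₀ hwNNm]
      exact h_int_lam
    have h_t1_meas : AEStronglyMeasurable (fun p : ℝ × ℝ => (f p.1 * ε₁ p.1) * g p.2) base :=
      ((hf.1.mul hε₁_int'.1).comp_fst).mul hg.1.comp_snd
    have h_t2_meas : AEStronglyMeasurable (fun p : ℝ × ℝ => f p.1 * (g p.2 * ε₂ p.2)) base :=
      hf.1.comp_fst.mul ((hg.1.mul hε₂_int'.1).comp_snd)
    have h_bound1 : ∀ p : ℝ × ℝ, ‖(f p.1 * ε₁ p.1) * g p.2‖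
        ≤ |wNN p • (f p.1 * g p.2)| := by
      intro p
      rw [h_smul_eq p, Real.norm_eq_abs]
      have h1 : |(f p.1 * ε₁ p.1) * g p.2| = ε₁ p.1 * |f p.1 * g p.2| := by
        rw [abs_mul, abs_mul, abs_of_nonneg (hε₁_nonneg _), abs_mul]; ring
      have h2 : |(f p.1 * ε₁ p.1) * g p.2 + f p.1 * (g p.2 * ε₂ p.2)|
          = (ε₁ p.1 + ε₂ p.2) * |f p.1 * g p.2| := by
        have : (f p.1 * ε₁ p.1) * g p.2 + f p.1 * (g p.2 * ε₂ p.2)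
            = (ε₁ p.1 + ε₂ p.2) * (f p.1 * g p.2) := by ring
        rw [this, abs_mul, abs_of_nonneg (add_nonneg (hε₁_nonneg _) (hε₂_nonneg _))]
      rw [h1, h2]
      have := abs_nonneg (f p.1 * g p.2)
      nlinarith [hε₂_nonneg p.2]
    have h_bound2 : ∀ p : ℝ × ℝ, ‖f p.1 * (g p.2 * ε₂ p.2)‖
        ≤ |wNN p • (f p.1 * g p.2)| := by
      intro p
      rw [h_smul_eq p, Real.norm_eq_abs]
      have h1 : |f p.1 * (g p.2 * ε₂ p.2)| = ε₂ p.2 * |f p.1 * g p.2| := by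
        rw [abs_mul, abs_mul, abs_of_nonneg (hε₂_nonneg _), abs_mul]; ring
      have h2 : |(f p.1 * ε₁ p.1) * g p.2 + f p.1 * (g p.2 * ε₂ p.2)|
          = (ε₁ p.1 + ε₂ p.2) * |f p.1 * g p.2| := by
        have : (f p.1 * ε₁ p.1) * g p.2 + f p.1 * (g p.2 * ε₂ p.2)
            = (ε₁ p.1 + ε₂ p.2) * (f p.1 * g p.2) := by ring
        rw [this, abs_mul, abs_of_nonneg (add_nonneg (hε₁_nonneg _) (hε₂_nonneg _))]
      rw [h1, h2]
      have := abs_nonneg (f p.1 * g p.2)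
      nlinarith [hε₁_nonneg p.1]
    have h_t1_int : Integrable (fun p : ℝ × ℝ => (f p.1 * ε₁ p.1) * g p.2) base :=
      h_tot_int.abs.mono' h_t1_meas (Filter.Eventually.of_forall h_bound1)
    have h_t2_int : Integrable (fun p : ℝ × ℝ => f p.1 * (g p.2 * ε₂ p.2)) base :=
      h_tot_int.abs.mono' h_t2_meas (Filter.Eventually.of_forall h_bound2)
    rw [hid]
    calc ∫ p, wNN p • (f p.1 * g p.2) ∂base
        = ∫ p, ((f p.1 * ε₁ p.1) * g p.2 + f p.1 * (g p.2 * ε₂ p.2)) ∂base :=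
          integral_congr_ae (Filter.Eventually.of_forall fun p => h_smul_eq p)
      _ = (∫ p, (f p.1 * ε₁ p.1) * g p.2 ∂base) +
            ∫ p, f p.1 * (g p.2 * ε₂ p.2) ∂base := integral_add h_t1_int h_t2_int
      _ = (∫ x, f x * ε₁ x ∂μ01) * (∫ y, g y ∂μ01) +
            (∫ x, f x ∂μ01) * (∫ y, g y * ε₂ y ∂μ01) := by
          rw [hbase_def, integral_prod_mul (fun x => f x * ε₁ x) g,
            integral_prod_mul f (fun y => g y * ε₂ y)]
      _ = 0 := by
          have hg0' : (∫ y, g y ∂μ01) = 0 := hg0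
          have hf0' : (∫ x, f x ∂μ01) = 0 := hf0
          rw [hg0', hf0']; ring
  -- second-moment accounting for f
  have h_tot_f : ∫ p, f p.1 ^ 2 ∂μ = ∫ x in I01, f x ^ 2 := by
    have hsm : AEStronglyMeasurable (fun x : ℝ => f x ^ 2) (μ.map Prod.fst) := by
      rw [hmarg1]
      exact (hf.1.mul hf.1).congr (Filter.Eventually.of_forall fun x => (sq (f x)).symm)
    rw [show (∫ x in I01, f x ^ 2) = ∫ x, f x ^ 2 ∂μ01 from rfl, ← hmarg1,
      integral_map measurable_fst.aemeasurable hsm]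
  have h_tot_g : ∫ p, g p.2 ^ 2 ∂μ = ∫ x in I01, g x ^ 2 := by
    have hsm : AEStronglyMeasurable (fun x : ℝ => g x ^ 2) (μ.map Prod.snd) := by
      rw [hmarg2]
      exact (hg.1.mul hg.1).congr (Filter.Eventually.of_forall fun x => (sq (g x)).symm)
    rw [show (∫ x in I01, g x ^ 2) = ∫ x, g x ^ 2 ∂μ01 from rfl, ← hmarg2,
      integral_map measurable_snd.aemeasurable hsm]
  have hFsq_int_μ : Integrable (fun p : ℝ × ℝ => f p.1 ^ 2) μ := hFμ.integrable_sq
  have hGsq_int_μ : Integrable (fun p : ℝ × ℝ => g p.2 ^ 2) μ := hGμ.integrable_sq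
  have h_split_f : ∫ p, f p.1 ^ 2 ∂μ =
      (∫ p, f p.1 ^ 2 ∂ν) + ∫ p, f p.1 ^ 2 ∂lam := by
    rw [← h_dec, integral_add_measure (hFsq_int_μ.mono_measure hν_le)
      (hFsq_int_μ.mono_measure hlam_le)]
  have h_split_g : ∫ p, g p.2 ^ 2 ∂μ =
      (∫ p, g p.2 ^ 2 ∂ν) + ∫ p, g p.2 ^ 2 ∂lam := by
    rw [← h_dec, integral_add_measure (hGsq_int_μ.mono_measure hν_le)
      (hGsq_int_μ.mono_measure hlam_le)]
  -- lower bounds on the lam parts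
  have h_lam_f : b * (∫ x in I01, f x ^ 2) ≤ ∫ p, f p.1 ^ 2 ∂lam := by
    set lam₂ : Measure (ℝ × ℝ) :=
      base.withDensity (fun p => ((Real.toNNReal (ε₂ p.2) : ℝ≥0) : ℝ≥0∞)) with hlam₂_def
    have hε₂NN : AEMeasurable (fun p : ℝ × ℝ => Real.toNNReal (ε₂ p.2)) base :=
      hε₂m.comp_snd.real_toNNReal
    have hlam₂_le : lam₂ ≤ lam := by
      apply withDensity_mono
      apply Filter.Eventually.of_forall
      intro p
      show ((Real.toNNReal (ε₂ p.2) : ℝ≥0) : ℝ≥0∞) ≤ ENNReal.ofReal (ε₁ p.1 + ε₂ p.2)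
      rw [show ((Real.toNNReal (ε₂ p.2) : ℝ≥0) : ℝ≥0∞) = ENNReal.ofReal (ε₂ p.2) from rfl]
      exact ENNReal.ofReal_le_ofReal (le_add_of_nonneg_left (hε₁_nonneg _))
    have h_eq : ∫ p, f p.1 ^ 2 ∂lam₂ = (∫ x in I01, f x ^ 2) * b := by
      rw [hlam₂_def, integral_withDensity_eq_integral_smul₀ hε₂NN]
      calc ∫ p, Real.toNNReal (ε₂ p.2) • (f p.1 ^ 2) ∂base
          = ∫ p, (f p.1 ^ 2) * ε₂ p.2 ∂base := by
            apply integral_congr_ae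
            apply Filter.Eventually.of_forall
            intro p
            show Real.toNNReal (ε₂ p.2) • (f p.1 ^ 2) = (f p.1 ^ 2) * ε₂ p.2
            rw [NNReal.smul_def, smul_eq_mul, Real.coe_toNNReal _ (hε₂_nonneg _)]
            ring
        _ = (∫ x, f x ^ 2 ∂μ01) * ∫ y, ε₂ y ∂μ01 := by
            rw [hbase_def, integral_prod_mul (fun x => f x ^ 2) ε₂]
        _ = (∫ x in I01, f x ^ 2) * b := rfl
    have h_mono : ∫ p, f p.1 ^ 2 ∂lam₂ ≤ ∫ p, f p.1 ^ 2 ∂lam :=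
      integral_mono_measure hlam₂_le
        (Filter.Eventually.of_forall fun p => sq_nonneg _)
        (hFsq_int_μ.mono_measure hlam_le)
    calc b * (∫ x in I01, f x ^ 2) = (∫ x in I01, f x ^ 2) * b := mul_comm _ _
      _ = ∫ p, f p.1 ^ 2 ∂lam₂ := h_eq.symm
      _ ≤ _ := h_mono
  have h_lam_g : a * (∫ x in I01, g x ^ 2) ≤ ∫ p, g p.2 ^ 2 ∂lam := by
    set lam₁ : Measure (ℝ × ℝ) :=
      base.withDensity (fun p => ((Real.toNNReal (ε₁ p.1) : ℝ≥0) : ℝ≥0∞)) with hlam₁_def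
    have hε₁NN : AEMeasurable (fun p : ℝ × ℝ => Real.toNNReal (ε₁ p.1)) base :=
      hε₁m.comp_fst.real_toNNReal
    have hlam₁_le : lam₁ ≤ lam := by
      apply withDensity_mono
      apply Filter.Eventually.of_forall
      intro p
      show ((Real.toNNReal (ε₁ p.1) : ℝ≥0) : ℝ≥0∞) ≤ ENNReal.ofReal (ε₁ p.1 + ε₂ p.2)
      rw [show ((Real.toNNReal (ε₁ p.1) : ℝ≥0) : ℝ≥0∞) = ENNReal.ofReal (ε₁ p.1) from rfl]
      exact ENNReal.ofReal_le_ofReal (le_add_of_nonneg_right (hε₂_nonneg _))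
    have h_eq : ∫ p, g p.2 ^ 2 ∂lam₁ = a * (∫ x in I01, g x ^ 2) := by
      rw [hlam₁_def, integral_withDensity_eq_integral_smul₀ hε₁NN]
      calc ∫ p, Real.toNNReal (ε₁ p.1) • (g p.2 ^ 2) ∂base
          = ∫ p, ε₁ p.1 * (g p.2 ^ 2) ∂base := by
            apply integral_congr_ae
            apply Filter.Eventually.of_forall
            intro p
            show Real.toNNReal (ε₁ p.1) • (g p.2 ^ 2) = ε₁ p.1 * (g p.2 ^ 2)
            rw [NNReal.smul_def, smul_eq_mul, Real.coe_toNNReal _ (hε₁_nonneg _)]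
        _ = (∫ x, ε₁ x ∂μ01) * ∫ y, g y ^ 2 ∂μ01 := by
            rw [hbase_def, integral_prod_mul ε₁ (fun y => g y ^ 2)]
        _ = a * (∫ x in I01, g x ^ 2) := rfl
    have h_mono : ∫ p, g p.2 ^ 2 ∂lam₁ ≤ ∫ p, g p.2 ^ 2 ∂lam :=
      integral_mono_measure hlam₁_le
        (Filter.Eventually.of_forall fun p => sq_nonneg _)
        (hGsq_int_μ.mono_measure hlam_le)
    calc a * (∫ x in I01, g x ^ 2) = ∫ p, g p.2 ^ 2 ∂lam₁ := h_eq.symm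
      _ ≤ _ := h_mono
  set Fn := ∫ x in I01, f x ^ 2 with hFn_def
  set Gn := ∫ x in I01, g x ^ 2 with hGn_def
  have hFn_nonneg : 0 ≤ Fn := integral_nonneg fun x => sq_nonneg _
  have hGn_nonneg : 0 ≤ Gn := integral_nonneg fun x => sq_nonneg _
  have h_f_ν : ∫ p, f p.1 ^ 2 ∂ν ≤ (1 - b) * Fn := by
    have := h_split_f
    rw [h_tot_f] at this
    nlinarith [h_lam_f]
  have h_g_ν : ∫ p, g p.2 ^ 2 ∂ν ≤ (1 - a) * Gn := by
    have := h_split_g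
    rw [h_tot_g] at this
    nlinarith [h_lam_g]
  have h_fν_nonneg : 0 ≤ ∫ p, f p.1 ^ 2 ∂ν := integral_nonneg fun p => sq_nonneg _
  have h_gν_nonneg : 0 ≤ ∫ p, g p.2 ^ 2 ∂ν := integral_nonneg fun p => sq_nonneg _
  clear_value a b Fn Gn
  -- Cauchy-Schwarz on ν
  have hconj : Real.HolderConjugate 2 2 := Real.HolderConjugate.two_two
  have h2e : ENNReal.ofReal (2 : ℝ) = 2 := by norm_num
  have hFν : MemLp (fun p : ℝ × ℝ => |f p.1|) (ENNReal.ofReal 2) ν := by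
    rw [h2e]
    simpa [Real.norm_eq_abs] using (hFμ.mono_measure hν_le).norm
  have hGν : MemLp (fun p : ℝ × ℝ => |g p.2|) (ENNReal.ofReal 2) ν := by
    rw [h2e]
    simpa [Real.norm_eq_abs] using (hGμ.mono_measure hν_le).norm
  have hCS := integral_mul_le_Lp_mul_Lq_of_nonneg (μ := ν) hconj
    (Filter.Eventually.of_forall fun p : ℝ × ℝ => abs_nonneg (f p.1))
    (Filter.Eventually.of_forall fun p : ℝ × ℝ => abs_nonneg (g p.2)) hFν hGν
  have h_rw_f : ∫ p : ℝ × ℝ, |f p.1| ^ (2 : ℝ) ∂ν = ∫ p, f p.1 ^ 2 ∂ν := by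
    apply integral_congr_ae
    apply Filter.Eventually.of_forall
    intro p
    show |f p.1| ^ (2 : ℝ) = f p.1 ^ 2
    rw [Real.rpow_two, sq_abs]
  have h_rw_g : ∫ p : ℝ × ℝ, |g p.2| ^ (2 : ℝ) ∂ν = ∫ p, g p.2 ^ 2 ∂ν := by
    apply integral_congr_ae
    apply Filter.Eventually.of_forall
    intro p
    show |g p.2| ^ (2 : ℝ) = g p.2 ^ 2
    rw [Real.rpow_two, sq_abs]
  rw [h_rw_f, h_rw_g] at hCS
  have h_abs : |∫ p, f p.1 * g p.2 ∂ν| ≤ ∫ p, |f p.1| * |g p.2| ∂ν := by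
    calc |∫ p, f p.1 * g p.2 ∂ν| ≤ ∫ p, ‖f p.1 * g p.2‖ ∂ν := by
          simpa [Real.norm_eq_abs] using
            norm_integral_le_integral_norm (μ := ν) (fun p : ℝ × ℝ => f p.1 * g p.2)
      _ = ∫ p, |f p.1| * |g p.2| ∂ν := by
          apply integral_congr_ae
          apply Filter.Eventually.of_forall
          intro p
          show ‖f p.1 * g p.2‖ = |f p.1| * |g p.2|
          rw [Real.norm_eq_abs, abs_mul]
  have h_sqrt_eq : ∀ x : ℝ, 0 ≤ x → x ^ (1 / (2 : ℝ)) = Real.sqrt x := by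
    intro x hx
    rw [Real.sqrt_eq_rpow]
  have hCS' : |∫ p, f p.1 * g p.2 ∂ν| ≤
      Real.sqrt (∫ p, f p.1 ^ 2 ∂ν) * Real.sqrt (∫ p, g p.2 ^ 2 ∂ν) := by
    rw [← h_sqrt_eq _ h_fν_nonneg, ← h_sqrt_eq _ h_gν_nonneg]
    exact le_trans h_abs hCS
  -- combine
  have hb_le_one : b ≤ 1 := by linarith
  have ha_le_one : a ≤ 1 := by linarith
  have h_sqrt_f : Real.sqrt (∫ p, f p.1 ^ 2 ∂ν) ≤ Real.sqrt (1 - b) * Real.sqrt Fn := by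
    rw [← Real.sqrt_mul (by linarith) Fn]
    exact Real.sqrt_le_sqrt h_f_ν
  have h_sqrt_g : Real.sqrt (∫ p, g p.2 ^ 2 ∂ν) ≤ Real.sqrt (1 - a) * Real.sqrt Gn := by
    rw [← Real.sqrt_mul (by linarith) Gn]
    exact Real.sqrt_le_sqrt h_g_ν
  have h_am : Real.sqrt (1 - b) * Real.sqrt (1 - a) ≤ 1 - (a + b) / 2 := by
    rw [← Real.sqrt_mul (by linarith) (1 - a)]
    calc Real.sqrt ((1 - b) * (1 - a)) ≤ Real.sqrt ((1 - (a + b) / 2) ^ 2) :=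
          Real.sqrt_le_sqrt aux_amgm
      _ = 1 - (a + b) / 2 := Real.sqrt_sq (by linarith)
  have h_final : |∫ p, f p.1 * g p.2 ∂ν| ≤
      (1 - (a + b) / 2) * Real.sqrt Fn * Real.sqrt Gn := by
    calc |∫ p, f p.1 * g p.2 ∂ν|
        ≤ Real.sqrt (∫ p, f p.1 ^ 2 ∂ν) * Real.sqrt (∫ p, g p.2 ^ 2 ∂ν) := hCS'
      _ ≤ (Real.sqrt (1 - b) * Real.sqrt Fn) * (Real.sqrt (1 - a) * Real.sqrt Gn) := by
          apply mul_le_mul h_sqrt_f h_sqrt_g (Real.sqrt_nonneg _)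
          positivity
      _ = (Real.sqrt (1 - b) * Real.sqrt (1 - a)) * (Real.sqrt Fn * Real.sqrt Gn) := by ring
      _ ≤ (1 - (a + b) / 2) * (Real.sqrt Fn * Real.sqrt Gn) := by
          apply mul_le_mul_of_nonneg_right h_am
          positivity
      _ = (1 - (a + b) / 2) * Real.sqrt Fn * Real.sqrt Gn := by ring
  rw [h_split, h_lam_zero, add_zero]
  exact h_final

/-- Let `μ` be a probability measure on `[0,1]²` whose two
coordinate marginals both equal Lebesgue measure on `[0,1]` (a copula measure).
Suppose there exist nonnegative integrable functions `ε₁, ε₂` with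
`ε := ∫₀¹ ε₁ + ∫₀¹ ε₂ > 0` such that `μ(A) ≥ ∫_A (ε₁(x) + ε₂(y)) dx dy` for
every measurable `A ⊆ [0,1]²`.  Then for all mean-zero `f, g ∈ L²(0,1)`,
`|∫ f(x) g(y) μ(d(x,y))| ≤ (1 − ε/2) ‖f‖₂ ‖g‖₂`; in particular the maximal
correlation coefficient `ρ₁` satisfies `ρ₁ ≤ 1 − ε/2 < 1`. -/
theorem copula_measure_lower_bound_maximal_correlation
    (μ : Measure (ℝ × ℝ)) [IsProbabilityMeasure μ]
    (hsupp : μ (I01 ×ˢ I01) = 1)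
    (hmarg1 : μ.map Prod.fst = μ01)
    (hmarg2 : μ.map Prod.snd = μ01)
    (ε₁ ε₂ : ℝ → ℝ)
    (hε₁_nonneg : ∀ x, 0 ≤ ε₁ x) (hε₂_nonneg : ∀ x, 0 ≤ ε₂ x)
    (hε₁_int : IntegrableOn ε₁ I01) (hε₂_int : IntegrableOn ε₂ I01)
    (hε_pos : 0 < (∫ x in I01, ε₁ x) + (∫ x in I01, ε₂ x))
    (hdom : ∀ A : Set (ℝ × ℝ), MeasurableSet A → A ⊆ I01 ×ˢ I01 →
      (∫⁻ p in A, ENNReal.ofReal (ε₁ p.1 + ε₂ p.2)) ≤ μ A) :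
    (∀ f g : ℝ → ℝ, MemLp f 2 μ01 → MemLp g 2 μ01 →
      (∫ x in I01, f x) = 0 → (∫ x in I01, g x) = 0 →
      |∫ p, f p.1 * g p.2 ∂μ| ≤
        (1 - ((∫ x in I01, ε₁ x) + (∫ x in I01, ε₂ x)) / 2) *
          Real.sqrt (∫ x in I01, f x ^ 2) * Real.sqrt (∫ x in I01, g x ^ 2)) ∧
    sSup {r : ℝ | ∃ f g : ℝ → ℝ, MemLp f 2 μ01 ∧ MemLp g 2 μ01 ∧
        (∫ x in I01, f x) = 0 ∧ (∫ x in I01, g x) = 0 ∧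
        (∫ x in I01, f x ^ 2) = 1 ∧ (∫ x in I01, g x ^ 2) = 1 ∧
        r = ∫ p, f p.1 * g p.2 ∂μ} ≤
      1 - ((∫ x in I01, ε₁ x) + (∫ x in I01, ε₂ x)) / 2 ∧
    1 - ((∫ x in I01, ε₁ x) + (∫ x in I01, ε₂ x)) / 2 < 1 := by
  have key := key_bound μ hmarg1 hmarg2 ε₁ ε₂ hε₁_nonneg hε₂_nonneg hε₁_int hε₂_int hdom
  set a := ∫ x in I01, ε₁ x with ha_def
  set b := ∫ x in I01, ε₂ x with hb_def
  -- a + b ≤ 1 (needed for nonnegativity of the bound)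
  have hab_le_one : a + b ≤ 1 := by
    have h := hdom (I01 ×ˢ I01) (I01_meas.prod I01_meas) le_rfl
    rw [hsupp] at h
    -- compute the lintegral
    have hε₁_int' : Integrable ε₁ μ01 := hε₁_int
    have hε₂_int' : Integrable ε₂ μ01 := hε₂_int
    have hε₁m : AEMeasurable ε₁ μ01 := hε₁_int'.aestronglyMeasurable.aemeasurable
    have hε₂m : AEMeasurable ε₂ μ01 := hε₂_int'.aestronglyMeasurable.aemeasurable
    have hbase : (volume : Measure (ℝ × ℝ)).restrict (I01 ×ˢ I01) = μ01.prod μ01 := by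
      rw [μ01, Measure.prod_restrict, ← Measure.volume_eq_prod]
    rw [show (∫⁻ p in I01 ×ˢ I01, ENNReal.ofReal (ε₁ p.1 + ε₂ p.2))
        = ∫⁻ p, ENNReal.ofReal (ε₁ p.1 + ε₂ p.2) ∂(μ01.prod μ01) from by rw [← hbase]] at h
    have hw_eq : (fun p : ℝ × ℝ => ENNReal.ofReal (ε₁ p.1 + ε₂ p.2))
        = fun p => ENNReal.ofReal (ε₁ p.1) + ENNReal.ofReal (ε₂ p.2) :=
      funext fun p => ENNReal.ofReal_add (hε₁_nonneg _) (hε₂_nonneg _)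
    rw [hw_eq, lintegral_add_left' hε₁m.comp_fst.ennreal_ofReal] at h
    have h1 : ∫⁻ p, ENNReal.ofReal (ε₁ p.1) ∂(μ01.prod μ01) = ENNReal.ofReal a := by
      calc ∫⁻ p, ENNReal.ofReal (ε₁ p.1) ∂(μ01.prod μ01)
          = (∫⁻ x, ENNReal.ofReal (ε₁ x) ∂μ01) * ∫⁻ _, (1 : ℝ≥0∞) ∂μ01 := by
            simpa using
              lintegral_prod_mul (μ := μ01) (ν := μ01) (f := fun x => ENNReal.ofReal (ε₁ x))
                (g := fun _ : ℝ => (1 : ℝ≥0∞)) hε₁m.ennreal_ofReal aemeasurable_const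
        _ = ENNReal.ofReal a := by
            rw [lintegral_one, measure_univ, mul_one,
              ← ofReal_integral_eq_lintegral_ofReal hε₁_int'
                (Filter.Eventually.of_forall hε₁_nonneg)]
            rfl
    have h2 : ∫⁻ p, ENNReal.ofReal (ε₂ p.2) ∂(μ01.prod μ01) = ENNReal.ofReal b := by
      calc ∫⁻ p, ENNReal.ofReal (ε₂ p.2) ∂(μ01.prod μ01)
          = (∫⁻ _, (1 : ℝ≥0∞) ∂μ01) * ∫⁻ x, ENNReal.ofReal (ε₂ x) ∂μ01 := by
            simpa using
              lintegral_prod_mul (μ := μ01) (ν := μ01) (f := fun _ : ℝ => (1 : ℝ≥0∞))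
                (g := fun x => ENNReal.ofReal (ε₂ x)) aemeasurable_const hε₂m.ennreal_ofReal
        _ = ENNReal.ofReal b := by
            rw [lintegral_one, measure_univ, one_mul,
              ← ofReal_integral_eq_lintegral_ofReal hε₂_int'
                (Filter.Eventually.of_forall hε₂_nonneg)]
            rfl
    rw [h1, h2, ← ENNReal.ofReal_add (integral_nonneg hε₁_nonneg)
      (integral_nonneg hε₂_nonneg)] at h
    exact ENNReal.ofReal_le_one.mp h
  have hbound_nonneg : (0 : ℝ) ≤ 1 - (a + b) / 2 := by linarith
  refine ⟨key, ?_, by linarith⟩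
  apply Real.sSup_le _ hbound_nonneg
  rintro r ⟨f, g, hf, hg, hf0, hg0, hf1, hg1, rfl⟩
  have := key f g hf hg hf0 hg0
  rw [hf1, hg1, Real.sqrt_one, mul_one, mul_one] at this
  exact le_trans (le_abs_self _) this
end

section
/- Let a ∈ (0,1] and define, for x ∈ (0,1] and y ∈ [0,1], c(x,y) = (3·2^{a−2} + 1 + (1/2 − y) x^{1/a − 1} sign(1/2 − x^{1/a})) / (1 + 3·2^{a−2}). Then c is a copula density, and c(x,y) ≥ (3·2^{a−2} + 1/2)/(1 + 3·2^{a−2}) > 0 for all x ∈ (0,1], y ∈ [0,1], i.e. c is bounded away from zero. -/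
open MeasureTheory

/-- The density
`c(x,y) = (3·2^(a−2) + 1 + (1/2 − y)·x^(1/a − 1)·sign(1/2 − x^(1/a))) / (1 + 3·2^(a−2))`. -/
noncomputable def c9 (a x y : ℝ) : ℝ :=
  (3 * (2 : ℝ) ^ (a - 2) + 1 +
      (1 / 2 - y) * x ^ (1 / a - 1) * Real.sign (1 / 2 - x ^ (1 / a))) /
    (1 + 3 * (2 : ℝ) ^ (a - 2))

open Set intervalIntegral in
/-- The key cancellation: the signed-power term integrates to zero in `x`,
and it is integrable on `[0,1]`. -/
lemma c9_sign_int (a : ℝ) (ha : a ∈ Set.Ioc (0 : ℝ) 1) :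
    ∫ x in I01, x ^ (1 / a - 1) * Real.sign (1 / 2 - x ^ (1 / a)) = 0 ∧
    IntegrableOn (fun x : ℝ => x ^ (1 / a - 1) * Real.sign (1 / 2 - x ^ (1 / a))) I01 := by
  obtain ⟨ha0, ha1⟩ := ha
  set p : ℝ := 1 / a - 1 with hp_def
  set f : ℝ → ℝ := fun x => x ^ p * Real.sign (1 / 2 - x ^ (1 / a)) with hf_def
  have hp : 0 ≤ p := by
    have := one_le_one_div ha0 ha1
    simp only [hp_def]; linarith
  have hainv : 0 < 1 / a := by positivity
  set t : ℝ := (2 : ℝ) ^ (-a) with ht_def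
  have ht0 : 0 < t := Real.rpow_pos_of_pos two_pos _
  have ht1 : t < 1 := Real.rpow_lt_one_of_one_lt_of_neg one_lt_two (by linarith)
  have htkey : t ^ (1 / a) = 1 / 2 := by
    rw [ht_def, ← Real.rpow_mul (by norm_num : (0:ℝ) ≤ 2),
      mul_one_div, neg_div, div_self ha0.ne', Real.rpow_neg_one]
    norm_num
  -- pointwise values on the open pieces
  have hlow : ∀ x ∈ Set.Ioo (0:ℝ) t, f x = x ^ p := by
    intro x hx
    have : x ^ (1/a) < 1/2 := by
      rw [← htkey]; exact Real.rpow_lt_rpow hx.1.le hx.2 hainv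
    simp only [hf_def]
    rw [Real.sign_of_pos (by linarith), mul_one]
  have hhigh : ∀ x ∈ Set.Ioo t (1:ℝ), f x = -(x ^ p) := by
    intro x hx
    have : 1/2 < x ^ (1/a) := by
      rw [← htkey]; exact Real.rpow_lt_rpow ht0.le hx.1 hainv
    simp only [hf_def]
    rw [Real.sign_of_neg (by linarith), mul_neg_one]
  have e1 : ((volume : Measure ℝ)).restrict (Set.Ioc 0 t) = volume.restrict (Set.Ioo 0 t) :=
    (Measure.restrict_congr_set Ioo_ae_eq_Ioc).symm
  have e2 : ((volume : Measure ℝ)).restrict (Set.Ioc t 1) = volume.restrict (Set.Ioo t 1) :=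
    (Measure.restrict_congr_set Ioo_ae_eq_Ioc).symm
  have ae1 : f =ᵐ[(volume : Measure ℝ).restrict (Set.Ioc 0 t)] fun x => x ^ p := by
    rw [e1]; exact ae_restrict_of_forall_mem measurableSet_Ioo hlow
  have ae2 : f =ᵐ[(volume : Measure ℝ).restrict (Set.Ioc t 1)] fun x => -(x ^ p) := by
    rw [e2]; exact ae_restrict_of_forall_mem measurableSet_Ioo hhigh
  have hu1 : Set.uIoc (0:ℝ) t = Set.Ioc 0 t := Set.uIoc_of_le ht0.le
  have hu2 : Set.uIoc t (1:ℝ) = Set.Ioc t 1 := Set.uIoc_of_le ht1.le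
  have ig1 : IntervalIntegrable (fun x : ℝ => x ^ p) volume 0 t :=
    intervalIntegral.intervalIntegrable_rpow (Or.inl hp)
  have ig2 : IntervalIntegrable (fun x : ℝ => -(x ^ p)) volume t 1 :=
    (intervalIntegral.intervalIntegrable_rpow (Or.inl hp)).neg
  have i1 : IntervalIntegrable f volume 0 t := ig1.congr_ae (by rw [hu1]; exact ae1.symm)
  have i2 : IntervalIntegrable f volume t 1 := ig2.congr_ae (by rw [hu2]; exact ae2.symm)
  have hp1 : p + 1 = 1 / a := by simp [hp_def]
  have hp1ne : p + 1 ≠ 0 := by rw [hp1]; positivity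
  have v1 : ∫ x in (0:ℝ)..t, f x = a / 2 := by
    rw [intervalIntegral.integral_congr_ae
        (by rw [hu1];
            exact (ae_restrict_iff' measurableSet_Ioc).mp ae1 |>.mono fun x h hx => h hx),
      integral_rpow (Or.inl (by linarith : (-1:ℝ) < p)),
      Real.zero_rpow hp1ne, hp1, htkey]
    field_simp
    norm_num
  have v2 : ∫ x in t..(1:ℝ), f x = -(a / 2) := by
    rw [intervalIntegral.integral_congr_ae
        (by rw [hu2];
            exact (ae_restrict_iff' measurableSet_Ioc).mp ae2 |>.mono fun x h hx => h hx),
      intervalIntegral.integral_neg,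
      integral_rpow (Or.inl (by linarith : (-1:ℝ) < p)),
      Real.one_rpow, hp1, htkey]
    field_simp
    ring
  have hsplit : ∫ x in (0:ℝ)..1, f x = 0 := by
    rw [← intervalIntegral.integral_add_adjacent_intervals i1 i2, v1, v2]; ring
  have i01 : IntervalIntegrable f volume 0 1 := i1.trans i2
  constructor
  · have : ∫ x in I01, f x = ∫ x in (0:ℝ)..1, f x := by
      rw [I01, MeasureTheory.integral_Icc_eq_integral_Ioc,
        intervalIntegral.integral_of_le zero_le_one]
    rw [this, hsplit]
  · rw [I01, integrableOn_Icc_iff_integrableOn_Ioc]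
    exact (intervalIntegrable_iff_integrableOn_Ioc_of_le zero_le_one).mp i01

lemma vol_I01 : (volume I01).toReal = 1 := by
  rw [I01, Real.volume_Icc]; norm_num

lemma c9_const_integrable (K : ℝ) : IntegrableOn (fun _ : ℝ => K) I01 volume := by
  exact integrableOn_const (by rw [I01, Real.volume_Icc]; norm_num)

open Set intervalIntegral in
lemma int_half_sub : ∫ y in I01, (1 / 2 - y : ℝ) = 0 := by
  rw [I01, MeasureTheory.integral_Icc_eq_integral_Ioc,
    ← intervalIntegral.integral_of_le zero_le_one,
    intervalIntegral.integral_sub intervalIntegrable_const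
      intervalIntegral.intervalIntegrable_id,
    intervalIntegral.integral_const, integral_id]
  norm_num

/-- The `y`-marginal of `c9` equals `1` for every `x`. -/
lemma c9_ymarg (a x : ℝ) : ∫ y in I01, c9 a x y = 1 := by
  set K : ℝ := 3 * (2 : ℝ) ^ (a - 2) with hK_def
  have hK : 0 < K := by positivity
  set B : ℝ := x ^ (1 / a - 1) * Real.sign (1 / 2 - x ^ (1 / a)) with hB_def
  have hc : ∀ y : ℝ, c9 a x y = ((K + 1) + (1 / 2 - y) * B) / (1 + K) := by
    intro y; simp only [c9, hB_def, hK_def, mul_assoc]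
  have hint2 : IntegrableOn (fun y : ℝ => (1 / 2 - y) * B) I01 volume := by
    apply Continuous.integrableOn_Icc; continuity
  calc ∫ y in I01, c9 a x y
      = (∫ y in I01, ((K + 1) + (1 / 2 - y) * B)) / (1 + K) := by
        simp only [hc]; exact integral_div _ _
    _ = ((∫ _ in I01, (K + 1)) + ∫ y in I01, (1 / 2 - y) * B) / (1 + K) := by
        rw [integral_add (c9_const_integrable _) hint2]
    _ = ((K + 1) + 0 * B) / (1 + K) := by
        rw [integral_mul_const, int_half_sub, setIntegral_const, measureReal_def, vol_I01, smul_eq_mul, one_mul]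
    _ = 1 := by field_simp; ring

/-- The `x`-marginal of `c9` equals `1` for every `y`. -/
lemma c9_xmarg (a y : ℝ) (ha : a ∈ Set.Ioc (0 : ℝ) 1) : ∫ x in I01, c9 a x y = 1 := by
  obtain ⟨hI, hint⟩ := c9_sign_int a ha
  set K : ℝ := 3 * (2 : ℝ) ^ (a - 2) with hK_def
  have hK : 0 < K := by positivity
  have hc : ∀ x : ℝ, c9 a x y =
      ((K + 1) + (1 / 2 - y) * (x ^ (1 / a - 1) * Real.sign (1 / 2 - x ^ (1 / a)))) / (1 + K) := by
    intro x; simp only [c9, hK_def, mul_assoc]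
  calc ∫ x in I01, c9 a x y
      = (∫ x in I01, ((K + 1) +
          (1 / 2 - y) * (x ^ (1 / a - 1) * Real.sign (1 / 2 - x ^ (1 / a))))) / (1 + K) := by
        simp only [hc]; exact integral_div _ _
    _ = ((∫ _ in I01, (K + 1)) + ∫ x in I01,
          (1 / 2 - y) * (x ^ (1 / a - 1) * Real.sign (1 / 2 - x ^ (1 / a)))) / (1 + K) := by
        rw [integral_add (c9_const_integrable _) (hint.const_mul _)]
    _ = ((K + 1) + (1 / 2 - y) * 0) / (1 + K) := by
        rw [integral_const_mul, hI, setIntegral_const, measureReal_def, vol_I01, smul_eq_mul, one_mul]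
    _ = 1 := by field_simp; ring

/-- The uniform lower bound for `c9`. -/
lemma c9_lower (a : ℝ) (ha : a ∈ Set.Ioc (0 : ℝ) 1) :
    ∀ x ∈ Set.Ioc (0 : ℝ) 1, ∀ y ∈ I01,
      (3 * (2 : ℝ) ^ (a - 2) + 1 / 2) / (1 + 3 * (2 : ℝ) ^ (a - 2)) ≤ c9 a x y := by
  obtain ⟨ha0, ha1⟩ := ha
  intro x hx y hy
  set K : ℝ := 3 * (2 : ℝ) ^ (a - 2) with hK_def
  have hK : 0 < K := by positivity
  set r : ℝ := (1 / 2 - y) * x ^ (1 / a - 1) * Real.sign (1 / 2 - x ^ (1 / a)) with hr_def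
  have hp : 0 ≤ 1 / a - 1 := by
    have := one_le_one_div ha0 ha1; linarith
  have hxp0 : 0 ≤ x ^ (1 / a - 1) := Real.rpow_nonneg hx.1.le _
  have hxp1 : x ^ (1 / a - 1) ≤ 1 := Real.rpow_le_one hx.1.le hx.2 hp
  have hs : |Real.sign (1 / 2 - x ^ (1 / a))| ≤ 1 := by
    rcases Real.sign_apply_eq (1 / 2 - x ^ (1 / a)) with h | h | h <;> rw [h] <;> norm_num
  have hyb : |(1 / 2 - y : ℝ)| ≤ 1 / 2 := by
    rw [abs_le]; constructor <;> [linarith [hy.2]; linarith [hy.1]]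
  have hr : |r| ≤ 1 / 2 := by
    rw [hr_def, abs_mul, abs_mul]
    calc |1 / 2 - y| * |x ^ (1 / a - 1)| * |Real.sign (1 / 2 - x ^ (1 / a))|
        ≤ (1 / 2) * 1 * 1 := by
          apply mul_le_mul (mul_le_mul hyb (by rwa [abs_of_nonneg hxp0]) (abs_nonneg _)
            (by norm_num)) hs (abs_nonneg _) (by norm_num)
      _ = 1 / 2 := by ring
  have hr' : -(1 / 2) ≤ r := (abs_le.mp hr).1
  show (K + 1 / 2) / (1 + K) ≤ (K + 1 + r) / (1 + K)
  exact div_le_div_of_nonneg_right (by linarith) (by linarith)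

/-- For `a ∈ (0,1]`, the function `c9 a` is a copula density,
and it satisfies `c(x,y) ≥ (3·2^(a−2) + 1/2)/(1 + 3·2^(a−2)) > 0` for all
`x ∈ (0,1]`, `y ∈ [0,1]`, i.e. it is bounded away from zero. -/
theorem c9_copula_density_bounded_below (a : ℝ) (ha : a ∈ Set.Ioc (0 : ℝ) 1) :
    (∀ x ∈ Set.Ioc (0 : ℝ) 1, ∀ y ∈ I01, 0 ≤ c9 a x y) ∧
    (∀ᵐ y ∂μ01, (∫ x in I01, c9 a x y) = 1) ∧
    (∀ᵐ x ∂μ01, (∫ y in I01, c9 a x y) = 1) ∧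
    (∀ x ∈ Set.Ioc (0 : ℝ) 1, ∀ y ∈ I01,
      (3 * (2 : ℝ) ^ (a - 2) + 1 / 2) / (1 + 3 * (2 : ℝ) ^ (a - 2)) ≤ c9 a x y) ∧
    0 < (3 * (2 : ℝ) ^ (a - 2) + 1 / 2) / (1 + 3 * (2 : ℝ) ^ (a - 2)) := by
  have hK : 0 < 3 * (2 : ℝ) ^ (a - 2) := by positivity
  have hpos : 0 < (3 * (2 : ℝ) ^ (a - 2) + 1 / 2) / (1 + 3 * (2 : ℝ) ^ (a - 2)) := by positivity
  exact ⟨fun x hx y hy => le_trans hpos.le (c9_lower a ha x hx y hy),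
    Filter.Eventually.of_forall (fun y => c9_xmarg a y ha),
    Filter.Eventually.of_forall (fun x => c9_ymarg a x),
    c9_lower a ha, hpos⟩
end

section
/- For α, β ≥ 0 with α + β ≤ 1, let C_{α,β}(x,y) = α·min(x,y) + (1−α−β)·xy + β·max(x+y−1, 0) on [0,1]², and let D_{α,β}(x,t) = α·𝟙(t < x) + (1−α−β)·x + β·𝟙(t > 1−x) (the a.e. partial derivative of C_{α,β}(x,·) at t). Then for all a, b, a′, b′ ≥ 0 with a+b ≤ 1 and a′+b′ ≤ 1, and all x, y ∈ [0,1]: ∫₀¹ D_{a,b}(x,t) · D_{a′,b′}(y,t) dt = C_{aa′+bb′, ab′+a′b}(x,y); that is, the fold product of the Frechet copulas C_{a,b} and C_{a′,b′} is the Frechet copula C_{aa′+bb′, ab′+a′b}. -/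
open MeasureTheory

/-- The Frechet copula `C_{α,β}(x,y) = α·min(x,y) + (1−α−β)·xy + β·max(x+y−1,0)`. -/
def frechetC (α β x y : ℝ) : ℝ :=
  α * min x y + (1 - α - β) * (x * y) + β * max (x + y - 1) 0

/-- The a.e. partial derivative of the Frechet copula `C_{α,β}(x,·)` at `t`:
`D_{α,β}(x,t) = α·𝟙(t < x) + (1−α−β)·x + β·𝟙(t > 1−x)`. -/
noncomputable def frechetD (α β x t : ℝ) : ℝ :=
  α * (if t < x then 1 else 0) + (1 - α - β) * x + β * (if 1 - x < t then 1 else 0)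

lemma integ_indicator' (u : Set ℝ) (hu : MeasurableSet u) :
    (∫ t in I01, u.indicator (fun _ => (1:ℝ)) t) = (volume (I01 ∩ u)).toReal := by
  rw [MeasureTheory.setIntegral_indicator hu]
  simp
  rfl

lemma intOn_indicator' (u : Set ℝ) (hu : MeasurableSet u) :
    IntegrableOn (u.indicator (fun _ => (1:ℝ))) I01 := by
  apply Integrable.indicator _ hu
  refine integrableOn_const ?_
  simp [I01, Real.volume_Icc]

lemma eq_ind_lt (c : ℝ) : (fun t => if t < c then (1:ℝ) else 0)
    = (Set.Iio c).indicator (fun _ => 1) := by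
  funext t; simp [Set.indicator_apply]

lemma eq_ind_gt (c : ℝ) : (fun t => if c < t then (1:ℝ) else 0)
    = (Set.Ioi c).indicator (fun _ => 1) := by
  funext t; simp [Set.indicator_apply]

lemma eq_ind_and (c d : ℝ) : (fun t => if c < t ∧ t < d then (1:ℝ) else 0)
    = (Set.Ioo c d).indicator (fun _ => 1) := by
  funext t; simp [Set.indicator_apply, Set.mem_Ioo]

lemma intOn_lt (c : ℝ) : IntegrableOn (fun t => if t < c then (1:ℝ) else 0) I01 := by
  rw [eq_ind_lt]; exact intOn_indicator' _ measurableSet_Iio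

lemma intOn_gt (c : ℝ) : IntegrableOn (fun t => if c < t then (1:ℝ) else 0) I01 := by
  rw [eq_ind_gt]; exact intOn_indicator' _ measurableSet_Ioi

lemma intOn_and (c d : ℝ) : IntegrableOn (fun t => if c < t ∧ t < d then (1:ℝ) else 0) I01 := by
  rw [eq_ind_and]; exact intOn_indicator' _ measurableSet_Ioo

lemma integ_lt (c : ℝ) (h0 : 0 ≤ c) (h1 : c ≤ 1) :
    (∫ t in I01, if t < c then (1:ℝ) else 0) = c := by
  rw [show (fun t => if t < c then (1:ℝ) else 0) = (Set.Iio c).indicator (fun _ => 1) from eq_ind_lt c,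
    integ_indicator' _ measurableSet_Iio]
  have hs : I01 ∩ Set.Iio c = Set.Ico 0 c := by
    ext t
    simp only [I01, Set.mem_inter_iff, Set.mem_Icc, Set.mem_Iio, Set.mem_Ico]
    constructor
    · rintro ⟨⟨ht0, _⟩, ht2⟩; exact ⟨ht0, ht2⟩
    · rintro ⟨ht0, ht2⟩; exact ⟨⟨ht0, by linarith⟩, ht2⟩
  rw [hs, Real.volume_Ico, sub_zero, ENNReal.toReal_ofReal h0]

lemma integ_gt (c : ℝ) (h0 : 0 ≤ c) (h1 : c ≤ 1) :
    (∫ t in I01, if 1 - c < t then (1:ℝ) else 0) = c := by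
  rw [show (fun t => if 1 - c < t then (1:ℝ) else 0) = (Set.Ioi (1-c)).indicator (fun _ => 1) from eq_ind_gt _,
    integ_indicator' _ measurableSet_Ioi]
  have hs : I01 ∩ Set.Ioi (1 - c) = Set.Ioc (1 - c) 1 := by
    ext t
    simp only [I01, Set.mem_inter_iff, Set.mem_Icc, Set.mem_Ioi, Set.mem_Ioc]
    constructor
    · rintro ⟨⟨_, ht1⟩, ht2⟩; exact ⟨ht2, ht1⟩
    · rintro ⟨ht2, ht1⟩; exact ⟨⟨by linarith, ht1⟩, ht2⟩
  rw [hs, Real.volume_Ioc]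
  rw [show 1 - (1 - c) = c by ring, ENNReal.toReal_ofReal h0]

lemma integ_and (c d : ℝ) (h0 : 0 ≤ c) (h1 : d ≤ 1) :
    (∫ t in I01, if c < t ∧ t < d then (1:ℝ) else 0) = max (d - c) 0 := by
  rw [show (fun t => if c < t ∧ t < d then (1:ℝ) else 0) = (Set.Ioo c d).indicator (fun _ => 1) from eq_ind_and _ _,
    integ_indicator' _ measurableSet_Ioo]
  have hs : I01 ∩ Set.Ioo c d = Set.Ioo c d := by
    apply Set.inter_eq_right.2
    intro t ht
    simp only [Set.mem_Ioo] at ht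
    exact ⟨by linarith [ht.1], by linarith [ht.2]⟩
  rw [hs, Real.volume_Ioo]
  rcases le_total 0 (d - c) with h | h
  · rw [ENNReal.toReal_ofReal h, max_eq_left h]
  · rw [ENNReal.ofReal_eq_zero.2 h, max_eq_right h]
    simp

/-- The fold product of the Frechet copulas `C_{a,b}` and
`C_{a′,b′}` is the Frechet copula `C_{aa′+bb′, ab′+a′b}`: for all admissible
parameters and all `x, y ∈ [0,1]`,
`∫₀¹ D_{a,b}(x,t)·D_{a′,b′}(y,t) dt = C_{aa′+bb′, ab′+a′b}(x,y)`. -/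
theorem frechet_fold_product (a b a' b' : ℝ)
    (ha : 0 ≤ a) (hb : 0 ≤ b) (hab : a + b ≤ 1)
    (ha' : 0 ≤ a') (hb' : 0 ≤ b') (hab' : a' + b' ≤ 1)
    (x y : ℝ) (hx : x ∈ I01) (hy : y ∈ I01) :
    (∫ t in I01, frechetD a b x t * frechetD a' b' y t) =
      frechetC (a * a' + b * b') (a * b' + a' * b) x y := by
  obtain ⟨hx0, hx1⟩ := hx
  obtain ⟨hy0, hy1⟩ := hy
  have hm0 : 0 ≤ min x y := le_min hx0 hy0
  have hm1 : min x y ≤ 1 := le_trans (min_le_left _ _) hx1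
  have hA : ∀ t : ℝ, (if t < x then (1:ℝ) else 0) * (if t < y then 1 else 0)
      = if t < min x y then 1 else 0 := by
    intro t; by_cases h1 : t < x <;> by_cases h2 : t < y <;>
      simp [h1, h2, lt_min_iff]
  have hB : ∀ t : ℝ, (if 1 - x < t then (1:ℝ) else 0) * (if 1 - y < t then 1 else 0)
      = if 1 - min x y < t then 1 else 0 := by
    intro t
    have heq : (1 - min x y < t) ↔ (1 - x < t ∧ 1 - y < t) := by
      rcases le_total x y with h | h <;>
        simp only [min_eq_left h, min_eq_right h] <;>
        constructor <;> intro hh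
      · exact ⟨hh, by linarith⟩
      · exact hh.1
      · exact ⟨by linarith, hh⟩
      · exact hh.2
    by_cases h1 : 1 - x < t <;> by_cases h2 : 1 - y < t <;>
      simp [h1, h2, heq]
  have hC : ∀ t : ℝ, (if t < x then (1:ℝ) else 0) * (if 1 - y < t then 1 else 0)
      = if 1 - y < t ∧ t < x then 1 else 0 := by
    intro t; by_cases h1 : t < x <;> by_cases h2 : 1 - y < t <;>
      simp [h1, h2]
  have hD : ∀ t : ℝ, (if 1 - x < t then (1:ℝ) else 0) * (if t < y then 1 else 0)
      = if 1 - x < t ∧ t < y then 1 else 0 := by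
    intro t; by_cases h1 : 1 - x < t <;> by_cases h2 : t < y <;>
      simp [h1, h2]
  have hpt : ∀ t : ℝ, frechetD a b x t * frechetD a' b' y t =
      a * a' * (if t < min x y then (1:ℝ) else 0)
      + b * b' * (if 1 - min x y < t then 1 else 0)
      + a * b' * (if 1 - y < t ∧ t < x then 1 else 0)
      + a' * b * (if 1 - x < t ∧ t < y then 1 else 0)
      + (a * ((1 - a' - b') * y)) * (if t < x then 1 else 0)
      + (((1 - a - b) * x) * a') * (if t < y then 1 else 0)
      + (b * ((1 - a' - b') * y)) * (if 1 - x < t then 1 else 0)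
      + (((1 - a - b) * x) * b') * (if 1 - y < t then 1 else 0)
      + ((1 - a - b) * x) * ((1 - a' - b') * y) := by
    intro t
    rw [← hA t, ← hB t, ← hC t, ← hD t]
    simp only [frechetD]
    ring
  have h1 := (intOn_lt (min x y)).const_mul (a * a')
  have h2 := (intOn_gt (1 - min x y)).const_mul (b * b')
  have h3 := (intOn_and (1 - y) x).const_mul (a * b')
  have h4 := (intOn_and (1 - x) y).const_mul (a' * b)
  have h5 := (intOn_lt x).const_mul (a * ((1 - a' - b') * y))
  have h6 := (intOn_lt y).const_mul (((1 - a - b) * x) * a')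
  have h7 := (intOn_gt (1 - x)).const_mul (b * ((1 - a' - b') * y))
  have h8 := (intOn_gt (1 - y)).const_mul (((1 - a - b) * x) * b')
  have h9 : IntegrableOn (fun _ : ℝ => ((1 - a - b) * x) * ((1 - a' - b') * y)) I01 := by
    refine integrableOn_const ?_
    simp [I01, Real.volume_Icc]
  have H2 : IntegrableOn (fun t : ℝ =>
      a * a' * (if t < min x y then (1:ℝ) else 0)
      + b * b' * (if 1 - min x y < t then 1 else 0)) I01 := h1.add h2
  have H3 : IntegrableOn (fun t : ℝ =>
      a * a' * (if t < min x y then (1:ℝ) else 0)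
      + b * b' * (if 1 - min x y < t then 1 else 0)
      + a * b' * (if 1 - y < t ∧ t < x then 1 else 0)) I01 := H2.add h3
  have H4 : IntegrableOn (fun t : ℝ =>
      a * a' * (if t < min x y then (1:ℝ) else 0)
      + b * b' * (if 1 - min x y < t then 1 else 0)
      + a * b' * (if 1 - y < t ∧ t < x then 1 else 0)
      + a' * b * (if 1 - x < t ∧ t < y then 1 else 0)) I01 := H3.add h4
  have H5 : IntegrableOn (fun t : ℝ =>
      a * a' * (if t < min x y then (1:ℝ) else 0)
      + b * b' * (if 1 - min x y < t then 1 else 0)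
      + a * b' * (if 1 - y < t ∧ t < x then 1 else 0)
      + a' * b * (if 1 - x < t ∧ t < y then 1 else 0)
      + (a * ((1 - a' - b') * y)) * (if t < x then 1 else 0)) I01 := H4.add h5
  have H6 : IntegrableOn (fun t : ℝ =>
      a * a' * (if t < min x y then (1:ℝ) else 0)
      + b * b' * (if 1 - min x y < t then 1 else 0)
      + a * b' * (if 1 - y < t ∧ t < x then 1 else 0)
      + a' * b * (if 1 - x < t ∧ t < y then 1 else 0)
      + (a * ((1 - a' - b') * y)) * (if t < x then 1 else 0)
      + (((1 - a - b) * x) * a') * (if t < y then 1 else 0)) I01 := H5.add h6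
  have H7 : IntegrableOn (fun t : ℝ =>
      a * a' * (if t < min x y then (1:ℝ) else 0)
      + b * b' * (if 1 - min x y < t then 1 else 0)
      + a * b' * (if 1 - y < t ∧ t < x then 1 else 0)
      + a' * b * (if 1 - x < t ∧ t < y then 1 else 0)
      + (a * ((1 - a' - b') * y)) * (if t < x then 1 else 0)
      + (((1 - a - b) * x) * a') * (if t < y then 1 else 0)
      + (b * ((1 - a' - b') * y)) * (if 1 - x < t then 1 else 0)) I01 := H6.add h7
  have H8 : IntegrableOn (fun t : ℝ =>
      a * a' * (if t < min x y then (1:ℝ) else 0)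
      + b * b' * (if 1 - min x y < t then 1 else 0)
      + a * b' * (if 1 - y < t ∧ t < x then 1 else 0)
      + a' * b * (if 1 - x < t ∧ t < y then 1 else 0)
      + (a * ((1 - a' - b') * y)) * (if t < x then 1 else 0)
      + (((1 - a - b) * x) * a') * (if t < y then 1 else 0)
      + (b * ((1 - a' - b') * y)) * (if 1 - x < t then 1 else 0)
      + (((1 - a - b) * x) * b') * (if 1 - y < t then 1 else 0)) I01 := H7.add h8
  simp only [hpt]
  rw [integral_add H8 h9, integral_add H7 h8, integral_add H6 h7, integral_add H5 h6,
      integral_add H4 h5, integral_add H3 h4, integral_add H2 h3, integral_add h1 h2]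
  rw [integral_const_mul, integral_const_mul, integral_const_mul, integral_const_mul,
      integral_const_mul, integral_const_mul, integral_const_mul, integral_const_mul]
  rw [integ_lt _ hm0 hm1, integ_gt _ hm0 hm1, integ_and _ _ (by linarith) hx1,
      integ_and _ _ (by linarith) hy1, integ_lt _ hx0 hx1, integ_lt _ hy0 hy1,
      integ_gt _ hx0 hx1, integ_gt _ hy0 hy1]
  rw [setIntegral_const]
  have hvol : volume.real I01 = 1 := by
    simp [I01, Measure.real, Real.volume_Icc]
  rw [hvol, one_smul]
  have hmx1 : max (x - (1 - y)) 0 = max (x + y - 1) 0 := by ring_nf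
  have hmx2 : max (y - (1 - x)) 0 = max (x + y - 1) 0 := by ring_nf
  rw [hmx1, hmx2, frechetC]
  ring
end

section
/- Let (E, ℰ) be a measurable space, ν a probability measure on E, and p : E → [0,1) a measurable function such that θ := ∫_E 1/(1−p(x)) ν(dx) < ∞. Define the Markov kernel Q(x, A) = p(x)·δ_x(A) + (1−p(x))·ν(A) and the measure π(dx) = ν(dx)/(θ(1−p(x))). Then π is a probability measure on E and π is invariant for Q: for every measurable A ⊆ E, ∫_E Q(x, A) π(dx) = π(A). -/
open MeasureTheory ENNReal

/-- `θ = ∫ 1/(1 − p(x)) ν(dx)`. -/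
noncomputable def mhTheta {E : Type*} [MeasurableSpace E] (ν : Measure E) (p : E → ℝ) : ℝ :=
  ∫ x, 1 / (1 - p x) ∂ν

/-- The measure `π(dx) = ν(dx)/(θ(1 − p(x)))`. -/
noncomputable def mhPi {E : Type*} [MeasurableSpace E] (ν : Measure E) (p : E → ℝ) :
    Measure E :=
  ν.withDensity fun x => ENNReal.ofReal (1 / (mhTheta ν p * (1 - p x)))

/-- The Markov kernel `Q(x, ·) = p(x)·δ_x + (1 − p(x))·ν`. -/
noncomputable def mhQ {E : Type*} [MeasurableSpace E] (ν : Measure E) (p : E → ℝ)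
    (x : E) : Measure E :=
  ENNReal.ofReal (p x) • Measure.dirac x + ENNReal.ofReal (1 - p x) • ν

/-- Let `(E, ℰ)` be a measurable space, `ν` a probability
measure on `E`, and `p : E → [0,1)` measurable with
`θ = ∫ 1/(1 − p(x)) ν(dx) < ∞` (i.e. `1/(1 − p)` is `ν`-integrable).  Then
`π(dx) = ν(dx)/(θ(1 − p(x)))` is a probability measure, and `π` is invariant
for the kernel `Q(x, A) = p(x)·δ_x(A) + (1 − p(x))·ν(A)`:
`∫ Q(x, A) π(dx) = π(A)` for every measurable `A`. -/
theorem mh_kernel_invariant_measure {E : Type*} [MeasurableSpace E]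
    (ν : Measure E) [IsProbabilityMeasure ν] (p : E → ℝ)
    (hp_meas : Measurable p) (hp_range : ∀ x, p x ∈ Set.Ico (0 : ℝ) 1)
    (hp_int : Integrable (fun x => 1 / (1 - p x)) ν) :
    IsProbabilityMeasure (mhPi ν p) ∧
    ∀ A : Set E, MeasurableSet A →
      (∫⁻ x, mhQ ν p x A ∂(mhPi ν p)) = mhPi ν p A := by
  have h1p : ∀ x, 0 < 1 - p x := fun x => by have := (hp_range x).2; linarith
  have hθ1 : (1:ℝ) ≤ mhTheta ν p := by
    have h := integral_mono (integrable_const (1:ℝ)) hp_int (fun x => by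
      exact one_le_one_div (h1p x) (by have := (hp_range x).1; linarith))
    rw [integral_const] at h; simpa [mhTheta, one_div] using h
  have hθpos : 0 < mhTheta ν p := by linarith
  set θ := mhTheta ν p with hθ
  have hfmeas : Measurable fun x => ENNReal.ofReal (1 / (θ * (1 - p x))) := by
    apply ENNReal.measurable_ofReal.comp
    exact (measurable_const.div ((measurable_const.sub hp_meas).const_mul θ))
  constructor
  · constructor
    show (ν.withDensity fun x => ENNReal.ofReal (1 / (θ * (1 - p x)))) Set.univ = 1
    rw [withDensity_apply _ MeasurableSet.univ, Measure.restrict_univ]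
    have hnn : 0 ≤ᵐ[ν] fun x => 1 / (θ * (1 - p x)) := by
      filter_upwards with x
      exact div_nonneg one_pos.le (mul_pos hθpos (h1p x)).le
    have hint : Integrable (fun x => 1 / (θ * (1 - p x))) ν := by
      have := hp_int.const_mul θ⁻¹
      convert this using 2 with x
      field_simp
    rw [← ofReal_integral_eq_lintegral_ofReal hint hnn]
    have h2 : ∫ x, 1 / (1 - p x) ∂ν = θ := rfl
    have : ∫ x, 1 / (θ * (1 - p x)) ∂ν = θ⁻¹ * ∫ x, 1 / (1 - p x) ∂ν := by
      rw [← integral_const_mul]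
      congr 1 with x
      field_simp
    rw [this, h2, inv_mul_cancel₀ (ne_of_gt hθpos), ENNReal.ofReal_one]
  · intro A hA
    show (∫⁻ x, (ENNReal.ofReal (p x) • Measure.dirac x + ENNReal.ofReal (1 - p x) • ν) A
        ∂(ν.withDensity fun x => ENNReal.ofReal (1 / (θ * (1 - p x)))))
      = (ν.withDensity fun x => ENNReal.ofReal (1 / (θ * (1 - p x)))) A
    set f : E → ℝ≥0∞ := fun x => ENNReal.ofReal (1 / (θ * (1 - p x))) with hf
    set π := ν.withDensity f with hπ
    have hQ : ∀ x, (ENNReal.ofReal (p x) • Measure.dirac x + ENNReal.ofReal (1 - p x) • ν) A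
        = A.indicator (fun y => ENNReal.ofReal (p y)) x + ENNReal.ofReal (1 - p x) * ν A := by
      intro x
      rw [Measure.add_apply, Measure.smul_apply, Measure.smul_apply, Measure.dirac_apply' _ hA,
        smul_eq_mul, smul_eq_mul]
      congr 1
      by_cases hx : x ∈ A <;> simp [hx]
    simp_rw [hQ]
    have hmeas1 : Measurable (A.indicator fun y => ENNReal.ofReal (p y)) :=
      hp_meas.ennreal_ofReal.indicator hA
    rw [lintegral_add_right _ (g := fun x => ENNReal.ofReal (1 - p x) * ν A) (((measurable_const.sub hp_meas).ennreal_ofReal).mul_const _)]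
    have hterm1 : ∫⁻ x, A.indicator (fun y => ENNReal.ofReal (p y)) x ∂π
        = ∫⁻ x in A, f x * ENNReal.ofReal (p x) ∂ν := by
      rw [lintegral_indicator hA, hπ, restrict_withDensity hA,
        lintegral_withDensity_eq_lintegral_mul _ hfmeas hp_meas.ennreal_ofReal]
      rfl
    have hterm2 : ∫⁻ x, ENNReal.ofReal (1 - p x) * ν A ∂π = ENNReal.ofReal θ⁻¹ * ν A := by
      rw [lintegral_mul_const _ (f := fun x => ENNReal.ofReal (1 - p x)) (measurable_const.sub hp_meas).ennreal_ofReal, hπ,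
        lintegral_withDensity_eq_lintegral_mul _ hfmeas (g := fun x => ENNReal.ofReal (1 - p x))
          (measurable_const.sub hp_meas).ennreal_ofReal]
      congr 1
      have : ∀ x, (f * fun x => ENNReal.ofReal (1 - p x)) x = ENNReal.ofReal θ⁻¹ := by
        intro x
        have hnn : (0:ℝ) ≤ 1 / (θ * (1 - p x)) := div_nonneg one_pos.le (mul_pos hθpos (h1p x)).le
        simp only [Pi.mul_apply, hf, ← ENNReal.ofReal_mul hnn]
        congr 1
        field_simp
        exact div_self (h1p x).ne'
      simp_rw [this, lintegral_const, measure_univ, mul_one]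
    rw [hterm1, hterm2, hπ, withDensity_apply _ hA]
    have hconst : ENNReal.ofReal θ⁻¹ * ν A = ∫⁻ x in A, ENNReal.ofReal θ⁻¹ ∂ν := by
      rw [setLIntegral_const]
    rw [hconst, ← lintegral_add_right _ measurable_const]
    apply lintegral_congr
    intro x
    have h1 : (0:ℝ) ≤ p x / (θ * (1 - p x)) := by
      have := (hp_range x).1; have := h1p x; positivity
    rw [hf]
    show ENNReal.ofReal (1 / (θ * (1 - p x))) * ENNReal.ofReal (p x) + ENNReal.ofReal θ⁻¹
        = ENNReal.ofReal (1 / (θ * (1 - p x)))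
    have hnn : (0:ℝ) ≤ 1 / (θ * (1 - p x)) := div_nonneg one_pos.le (mul_pos hθpos (h1p x)).le
    rw [← ENNReal.ofReal_mul hnn, ← ENNReal.ofReal_add (by have := (hp_range x).1; positivity) (inv_nonneg.2 hθpos.le)]
    congr 1
    have hne := (h1p x).ne'
    field_simp
    ring
end

section
/- Let (φ_i)_{i≥1} be an orthonormal family in L²(0,1), let (λ_i)_{i≥1} be nonnegative reals with ∑ λ_i < ∞, and suppose c ∈ L²([0,1]²) satisfies c(u,v) = 1 + ∑_{i≥1} λ_i φ_i(u) φ_i(v) with convergence in L²([0,1]²). Then for every Borel measurable set B ⊆ [0,1], ∫₀¹ |∫_B (c(u,v) − 1) du| dv ≤ ∑_{i≥1} λ_i. (Applied to the k-step kernel with coefficients λ_i^k, this yields the bound β_k ≤ ∑ λ_i^k ≤ M λ₁^k on the absolute regularity coefficient of the Markov chain generated by a symmetric copula with square-integrable density.) -/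
open MeasureTheory Filter

instance isProb_mu01 : IsProbabilityMeasure μ01 := by
  constructor
  simp [μ01, I01, Real.volume_Icc]

/-- Cauchy–Schwarz: on a probability space, the `L¹` norm is bounded by the `L²` norm. -/
lemma int_norm_le_sqrt {α : Type*} {m : MeasurableSpace α} {μ : Measure α}
    [IsProbabilityMeasure μ] {h : α → ℝ} (hh : MemLp h 2 μ) :
    ∫ x, ‖h x‖ ∂μ ≤ Real.sqrt (∫ x, (h x) ^ 2 ∂μ) := by
  have hconj : (2:ℝ).HolderConjugate 2 := Real.HolderConjugate.two_two
  have hmem : MemLp (fun x => ‖h x‖) (ENNReal.ofReal 2) μ := by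
    simpa [ENNReal.ofReal_ofNat] using hh.norm
  have hone : MemLp (fun _ : α => (1:ℝ)) (ENNReal.ofReal 2) μ := by
    simpa [ENNReal.ofReal_ofNat] using (memLp_const (1:ℝ) : MemLp _ 2 μ)
  have key := integral_mul_le_Lp_mul_Lq_of_nonneg (μ := μ) hconj
    (ae_of_all _ fun x => norm_nonneg (h x)) (ae_of_all _ fun _ => zero_le_one) hmem hone
  simp only [mul_one] at key
  calc ∫ x, ‖h x‖ ∂μ
      ≤ (∫ x, ‖h x‖ ^ (2:ℝ) ∂μ) ^ (1/(2:ℝ)) * (∫ _x, (1:ℝ) ^ (2:ℝ) ∂μ) ^ (1/(2:ℝ)) := key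
    _ = Real.sqrt (∫ x, (h x) ^ 2 ∂μ) := by
        have h1 : (∫ x, ‖h x‖ ^ (2:ℝ) ∂μ) = ∫ x, (h x) ^ 2 ∂μ := by
          refine integral_congr_ae (ae_of_all _ fun x => ?_)
          show ‖h x‖ ^ (2:ℝ) = h x ^ 2
          rw [Real.rpow_two, Real.norm_eq_abs, sq_abs]
        have h2 : (∫ _x, (1:ℝ) ^ (2:ℝ) ∂μ) = 1 := by
          simp [Real.one_rpow]
        rw [h1, h2, Real.one_rpow, mul_one, Real.sqrt_eq_rpow]

/-- `L²` functions of one variable multiply to an `L²` function on the product. -/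
lemma memℒp_prod_mul {f g : ℝ → ℝ} (hf : MemLp f 2 μ01) (hg : MemLp g 2 μ01) :
    MemLp (fun p : ℝ × ℝ => f p.1 * g p.2) 2 (μ01.prod μ01) := by
  have hm : AEStronglyMeasurable (fun p : ℝ × ℝ => f p.1 * g p.2) (μ01.prod μ01) :=
    hf.aestronglyMeasurable.comp_fst.mul hg.aestronglyMeasurable.comp_snd
  rw [memLp_two_iff_integrable_sq hm]
  have : (fun p : ℝ × ℝ => (f p.1 * g p.2) ^ 2)
      = fun p : ℝ × ℝ => (f p.1 ^ 2) * (g p.2 ^ 2) := by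
    funext p; ring
  rw [this]
  exact Integrable.mul_prod
    ((memLp_two_iff_integrable_sq hf.aestronglyMeasurable).mp hf)
    ((memLp_two_iff_integrable_sq hg.aestronglyMeasurable).mp hg)

/-- Let `(φ i)` (indexed by `ℕ`, representing `i ≥ 1`) be an
orthonormal family in `L²(0,1)`, `(λ i)` nonnegative reals with `∑ λ i < ∞`,
and suppose `c ∈ L²([0,1]²)` satisfies `c(u,v) = 1 + ∑ᵢ λ i·φ i(u)·φ i(v)` with
convergence in `L²([0,1]²)`.  Then for every Borel measurable `B ⊆ [0,1]`,
`∫₀¹ |∫_B (c(u,v) − 1) du| dv ≤ ∑ᵢ λ i`.  (Applied to the `k`-step kernel with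
coefficients `λᵢᵏ`, this bounds the absolute regularity coefficient:
`β_k ≤ ∑ λᵢᵏ ≤ M λ₁ᵏ`.) -/
theorem beta_coefficient_spectral_bound
    (φ : ℕ → ℝ → ℝ) (lam : ℕ → ℝ) (c : ℝ → ℝ → ℝ)
    (hφ_L2 : ∀ i, MemLp (φ i) 2 μ01)
    (hφ_ortho : ∀ i j, (∫ x in I01, φ i x * φ j x) = if i = j then 1 else 0)
    (hlam_nonneg : ∀ i, 0 ≤ lam i)
    (hlam_sum : Summable lam)
    (hc_L2 : MemLp (Function.uncurry c) 2 (μ01.prod μ01))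
    (hc_repr : Tendsto (fun N =>
        ∫ p, (c p.1 p.2 - 1 -
          ∑ i ∈ Finset.range N, lam i * φ i p.1 * φ i p.2) ^ 2 ∂(μ01.prod μ01))
      atTop (nhds 0)) :
    ∀ B : Set ℝ, MeasurableSet B → B ⊆ I01 →
      (∫ v in I01, |∫ u in B, (c u v - 1)|) ≤ ∑' i, lam i := by
  intro B hB hBI
  haveI : IsProbabilityMeasure μ01 := isProb_mu01
  -- the restriction to B is dominated by μ01
  have hres : volume.restrict B ≤ μ01 := by
    have hrB : μ01.restrict B = volume.restrict B := by
      rw [μ01, Measure.restrict_restrict hB, Set.inter_eq_self_of_subset_left hBI]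
    rw [← hrB]; exact Measure.restrict_le_self
  -- basic facts about φ
  have hφ_int : ∀ i, Integrable (φ i) μ01 := fun i => (hφ_L2 i).integrable one_le_two
  have hφ_sq : ∀ i, (∫ x, (φ i x) ^ 2 ∂μ01) = 1 := by
    intro i
    have := hφ_ortho i i
    simp only [if_pos] at this
    calc (∫ x, (φ i x) ^ 2 ∂μ01) = ∫ x in I01, φ i x * φ i x := by
          refine integral_congr_ae (ae_of_all _ fun x => ?_)
          show (φ i x) ^ 2 = φ i x * φ i x
          rw [sq]
      _ = 1 := this
  have hφ_abs : ∀ i, (∫ x, ‖φ i x‖ ∂μ01) ≤ 1 := by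
    intro i
    have := int_norm_le_sqrt (hφ_L2 i)
    rwa [hφ_sq i, Real.sqrt_one] at this
  have ha_le : ∀ i, |∫ u in B, φ i u| ≤ 1 := by
    intro i
    calc |∫ u in B, φ i u| ≤ ∫ u in B, ‖φ i u‖ := by
          rw [← Real.norm_eq_abs]; exact norm_integral_le_integral_norm _
      _ ≤ ∫ u, ‖φ i u‖ ∂μ01 :=
          integral_mono_measure hres (ae_of_all _ fun u => norm_nonneg _) (hφ_int i).norm
      _ ≤ 1 := hφ_abs i
  -- reduce to a bound for each N
  set T : ℝ := ∑' i, lam i with hT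
  have key : ∀ N : ℕ, (∫ v in I01, |∫ u in B, (c u v - 1)|)
      ≤ Real.sqrt (∫ p, (c p.1 p.2 - 1 -
          ∑ i ∈ Finset.range N, lam i * φ i p.1 * φ i p.2) ^ 2 ∂(μ01.prod μ01)) + T := by
    intro N
    set fN : ℝ × ℝ → ℝ := fun p =>
      c p.1 p.2 - 1 - ∑ i ∈ Finset.range N, lam i * φ i p.1 * φ i p.2 with hfN
    -- fN is in L² of the product
    have hsum_mem : MemLp (fun p : ℝ × ℝ => ∑ i ∈ Finset.range N,
        lam i * φ i p.1 * φ i p.2) 2 (μ01.prod μ01) := by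
      refine memLp_finsetSum _ fun i _ => ?_
      have : (fun p : ℝ × ℝ => lam i * φ i p.1 * φ i p.2)
          = fun p : ℝ × ℝ => lam i * (φ i p.1 * φ i p.2) := by
        funext p; ring
      rw [this]
      exact (memℒp_prod_mul (hφ_L2 i) (hφ_L2 i)).const_mul (lam i)
    have hfN_mem : MemLp fN 2 (μ01.prod μ01) :=
      (hc_L2.sub (memLp_const 1)).sub hsum_mem
    have hfN_int : Integrable fN (μ01.prod μ01) := hfN_mem.integrable one_le_two
    -- a.e. slice integrability
    have h_slice : ∀ᵐ v ∂μ01, Integrable (fun u => fN (u, v)) μ01 :=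
      hfN_int.prod_left_ae
    -- integrable majorant
    set g : ℝ → ℝ := fun v =>
      (∫ u, ‖fN (u, v)‖ ∂μ01) + ∑ i ∈ Finset.range N, lam i * ‖φ i v‖ with hg
    have hInt1 : Integrable (fun v => ∫ u, ‖fN (u, v)‖ ∂μ01) μ01 :=
      hfN_int.integral_norm_prod_right
    have hInt2 : Integrable (fun v => ∑ i ∈ Finset.range N, lam i * ‖φ i v‖) μ01 :=
      integrable_finset_sum _ fun i _ => ((hφ_int i).norm.const_mul (lam i))
    have hg_int : Integrable g μ01 := hInt1.add hInt2
    -- pointwise a.e. bound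
    have hae : ∀ᵐ v ∂μ01, |∫ u in B, (c u v - 1)| ≤ g v := by
      filter_upwards [h_slice] with v hv
      have hvB : Integrable (fun u => fN (u, v)) (volume.restrict B) :=
        hv.mono_measure hres
      have hterm : ∀ i ∈ Finset.range N,
          Integrable (fun u => lam i * φ i u * φ i v) (volume.restrict B) :=
        fun i _ => (((hφ_int i).mono_measure hres).const_mul (lam i)).mul_const (φ i v)
      have hsum_int : Integrable
          (fun u => ∑ i ∈ Finset.range N, lam i * φ i u * φ i v) (volume.restrict B) :=
        integrable_finset_sum _ hterm
      have hdecomp : (∫ u in B, (c u v - 1))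
          = (∫ u in B, fN (u, v))
            + ∑ i ∈ Finset.range N, lam i * (∫ u in B, φ i u) * φ i v := by
        have heq : (fun u => c u v - 1)
            = fun u => fN (u, v) + ∑ i ∈ Finset.range N, lam i * φ i u * φ i v := by
          funext u; simp only [hfN]; ring
        rw [heq, integral_add hvB hsum_int, integral_finset_sum _ hterm]
        congr 1
        refine Finset.sum_congr rfl fun i _ => ?_
        rw [integral_mul_const, integral_const_mul]
      rw [hdecomp]
      calc |(∫ u in B, fN (u, v))
            + ∑ i ∈ Finset.range N, lam i * (∫ u in B, φ i u) * φ i v|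
          ≤ |∫ u in B, fN (u, v)|
            + |∑ i ∈ Finset.range N, lam i * (∫ u in B, φ i u) * φ i v| := abs_add_le _ _
        _ ≤ (∫ u, ‖fN (u, v)‖ ∂μ01) + ∑ i ∈ Finset.range N, lam i * ‖φ i v‖ := by
            refine add_le_add ?_ ?_
            · calc |∫ u in B, fN (u, v)| ≤ ∫ u in B, ‖fN (u, v)‖ := by
                    rw [← Real.norm_eq_abs]; exact norm_integral_le_integral_norm _
                _ ≤ ∫ u, ‖fN (u, v)‖ ∂μ01 :=
                    integral_mono_measure hres (ae_of_all _ fun u => norm_nonneg _) hv.norm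
            · calc |∑ i ∈ Finset.range N, lam i * (∫ u in B, φ i u) * φ i v|
                  ≤ ∑ i ∈ Finset.range N, |lam i * (∫ u in B, φ i u) * φ i v| :=
                    Finset.abs_sum_le_sum_abs _ _
                _ ≤ ∑ i ∈ Finset.range N, lam i * ‖φ i v‖ := by
                    refine Finset.sum_le_sum fun i _ => ?_
                    rw [abs_mul, abs_mul, abs_of_nonneg (hlam_nonneg i), Real.norm_eq_abs]
                    have h1 : lam i * |∫ u in B, φ i u| ≤ lam i * 1 :=
                      mul_le_mul_of_nonneg_left (ha_le i) (hlam_nonneg i)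
                    calc lam i * |∫ u in B, φ i u| * |φ i v|
                        ≤ lam i * 1 * |φ i v| :=
                          mul_le_mul_of_nonneg_right h1 (abs_nonneg _)
                      _ = lam i * |φ i v| := by ring
    -- integrate the bound
    have hmono : (∫ v in I01, |∫ u in B, (c u v - 1)|) ≤ ∫ v, g v ∂μ01 :=
      integral_mono_of_nonneg (ae_of_all _ fun v => abs_nonneg _) hg_int hae
    refine hmono.trans ?_
    -- compute / bound ∫ g
    have hsplit : (∫ v, g v ∂μ01)
        = (∫ v, (∫ u, ‖fN (u, v)‖ ∂μ01) ∂μ01)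
          + ∑ i ∈ Finset.range N, lam i * (∫ v, ‖φ i v‖ ∂μ01) := by
      rw [hg, integral_add hInt1 hInt2,
        integral_finset_sum _ (fun i _ => ((hφ_int i).norm.const_mul (lam i)))]
      congr 1
      exact Finset.sum_congr rfl fun i _ => integral_const_mul _ _
    rw [hsplit]
    refine add_le_add ?_ ?_
    · -- Fubini plus Cauchy–Schwarz on the product
      have hnint : Integrable (Function.uncurry fun u v => ‖fN (u, v)‖) (μ01.prod μ01) :=
        hfN_int.norm
      have hswap : (∫ v, (∫ u, ‖fN (u, v)‖ ∂μ01) ∂μ01)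
          = ∫ p, ‖fN p‖ ∂(μ01.prod μ01) := by
        rw [← integral_integral_swap hnint, integral_integral hnint]
      rw [hswap]
      exact int_norm_le_sqrt hfN_mem
    · calc ∑ i ∈ Finset.range N, lam i * (∫ v, ‖φ i v‖ ∂μ01)
          ≤ ∑ i ∈ Finset.range N, lam i * 1 :=
            Finset.sum_le_sum fun i _ =>
              mul_le_mul_of_nonneg_left (hφ_abs i) (hlam_nonneg i)
        _ = ∑ i ∈ Finset.range N, lam i := by simp
        _ ≤ T := Summable.sum_le_tsum _ (fun i _ => hlam_nonneg i) hlam_sum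
  -- pass to the limit N → ∞
  have hlim : Tendsto (fun N => Real.sqrt (∫ p, (c p.1 p.2 - 1 -
      ∑ i ∈ Finset.range N, lam i * φ i p.1 * φ i p.2) ^ 2 ∂(μ01.prod μ01)) + T)
      atTop (nhds T) := by
    have h1 : Tendsto (fun N => Real.sqrt (∫ p, (c p.1 p.2 - 1 -
        ∑ i ∈ Finset.range N, lam i * φ i p.1 * φ i p.2) ^ 2 ∂(μ01.prod μ01)))
        atTop (nhds 0) := by
      have := (Real.continuous_sqrt.tendsto 0).comp hc_repr
      simpa [Function.comp_def] using this
    simpa using h1.add (tendsto_const_nhds (x := T))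
  exact ge_of_tendsto' hlim key
end
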